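/- arXiv:2210.00574 — 5 statements merged into one kernel-verified Lean document; each statement's English description precedes it below -/
import Mathlib

section
/- Let n ≥ 1 be an integer, let Ω ⊆ ℝⁿ be an open set, and let p : Ω × Ω → ℝ be measurable satisfying (P). Let s₀ ∈ (0,1) and let u : ℝⁿ → ℝ be continuously differentiable with compact support. Define F_s(x) := s(1−s) ∫_Ω |u(x)−u(y)|^{p(x,y)} / |x−y|^{n+s·p(x,y)} dy for x ∈ Ω and s ∈ (0,1). Then there exists a function F ∈ L¹(Ω) such that F_s(x) ≤ F(x) for every x ∈ Ω and every s ∈ [s₀, 1). -/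
open MeasureTheory Filter Metric Set
open scoped ENNReal Topology

open Module

variable {E : Type*} [NormedAddCommGroup E] [NormedSpace ℝ E] [MeasurableSpace E]
  [BorelSpace E] [FiniteDimensional ℝ E]

lemma near_bound (μ : Measure E) [μ.IsAddHaarMeasure] {β : ℝ} (hβ : 0 < β) :
    ∫⁻ z in ball (0 : E) 1, ENNReal.ofReal (‖z‖ ^ (β - (finrank ℝ E : ℝ))) ∂μ ≤
      μ (ball 0 1) * (1 + ENNReal.ofReal ((finrank ℝ E : ℝ) / β)) := by
  set d : ℝ := (finrank ℝ E : ℝ) with hd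
  have hd0 : 0 ≤ d := Nat.cast_nonneg _
  rcases le_or_gt d β with hcase | hcase
  · -- β ≥ d : integrand ≤ 1 on ball
    calc ∫⁻ z in ball (0 : E) 1, ENNReal.ofReal (‖z‖ ^ (β - d)) ∂μ
        ≤ ∫⁻ _ in ball (0 : E) 1, 1 ∂μ := by
          apply lintegral_mono_ae
          filter_upwards [ae_restrict_mem measurableSet_ball] with z hz
          rw [mem_ball_zero_iff] at hz
          rcases eq_or_ne z 0 with rfl | hz0
          · rcases eq_or_ne (β - d) 0 with h | h
            · simp [h]
            · simp [Real.zero_rpow h]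
          · have h1 : ‖z‖ ^ (β - d) ≤ 1 :=
              Real.rpow_le_one (norm_nonneg _) hz.le (by linarith)
            simpa using ENNReal.ofReal_le_ofReal h1
      _ = μ (ball 0 1) := by simp
      _ ≤ _ := le_mul_of_one_le_right zero_le (le_add_right le_rfl)
  · -- β < d
    have hmeas : AEMeasurable (fun z : E => ‖z‖ ^ (β - d)) (μ.restrict (ball 0 1)) := by
      fun_prop
    rw [lintegral_eq_lintegral_meas_le _ (ae_of_all _ fun z => Real.rpow_nonneg (norm_nonneg _) _)
      hmeas]
    have hsplit : (Ioi (0:ℝ)) = Ioc (0:ℝ) 1 ∪ Ioi 1 := (Ioc_union_Ioi_eq_Ioi zero_le_one).symm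
    calc ∫⁻ t in Ioi (0:ℝ), μ.restrict (ball 0 1) {a | t ≤ ‖a‖ ^ (β - d)}
        ≤ (∫⁻ t in Ioc (0:ℝ) 1, μ.restrict (ball 0 1) {a | t ≤ ‖a‖ ^ (β - d)}) +
          ∫⁻ t in Ioi (1:ℝ), μ.restrict (ball 0 1) {a | t ≤ ‖a‖ ^ (β - d)} := by
          rw [hsplit]; exact lintegral_union_le _ _ _
      _ ≤ μ (ball 0 1) * 1 + ENNReal.ofReal (d / β) * μ (ball 0 1) := by
          gcongr
          · calc ∫⁻ t in Ioc (0:ℝ) 1, μ.restrict (ball 0 1) {a | t ≤ ‖a‖ ^ (β - d)}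
                ≤ ∫⁻ _ in Ioc (0:ℝ) 1, μ (ball (0:E) 1) := by
                  apply lintegral_mono fun t => ?_
                  exact (measure_mono (subset_univ _)).trans_eq (Measure.restrict_apply_univ _)
              _ = μ (ball 0 1) * 1 := by
                  rw [setLIntegral_const]; simp [Real.volume_Ioc]
          · -- Ioi 1 part
            have hdβ : 0 < d - β := by linarith
            have ha : 1 < d / (d - β) := (one_lt_div hdβ).2 (by linarith)
            calc ∫⁻ t in Ioi (1:ℝ), μ.restrict (ball 0 1) {a | t ≤ ‖a‖ ^ (β - d)}
                ≤ ∫⁻ t in Ioi (1:ℝ), ENNReal.ofReal (t ^ (-(d / (d - β)))) * μ (ball (0:E) 1) := by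
                  apply lintegral_mono_ae
                  filter_upwards [ae_restrict_mem measurableSet_Ioi] with t ht
                  have ht0 : (0:ℝ) < t := lt_trans one_pos ht
                  have hsub : {a : E | t ≤ ‖a‖ ^ (β - d)} ⊆ closedBall 0 (t ^ (-(d - β)⁻¹)) := by
                    intro a ha'
                    simp only [mem_setOf_eq] at ha'
                    simp only [mem_closedBall_zero_iff]
                    rcases eq_or_ne a 0 with rfl | ha0
                    · exfalso
                      rw [norm_zero, Real.zero_rpow (ne_of_lt (by linarith : β - d < 0))] at ha'
                      linarith
                    · have hna : (0:ℝ) < ‖a‖ := norm_pos_iff.2 ha0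
                      have h2 : (‖a‖ ^ (β - d)) ^ (-(d - β)⁻¹) = ‖a‖ := by
                        rw [← Real.rpow_mul hna.le]
                        rw [show (β - d) * (-(d - β)⁻¹) = 1 by
                          field_simp; ring]
                        exact Real.rpow_one _
                      calc ‖a‖ = (‖a‖ ^ (β - d)) ^ (-(d - β)⁻¹) := h2.symm
                        _ ≤ t ^ (-(d - β)⁻¹) :=
                          Real.rpow_le_rpow_of_nonpos ht0 ha'
                            (by simp [inv_nonneg, hdβ.le])
                  calc μ.restrict (ball 0 1) {a : E | t ≤ ‖a‖ ^ (β - d)}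
                      ≤ μ (closedBall 0 (t ^ (-(d - β)⁻¹))) :=
                        (Measure.restrict_apply_le _ _).trans (measure_mono hsub)
                    _ = ENNReal.ofReal ((t ^ (-(d - β)⁻¹)) ^ finrank ℝ E) * μ (ball 0 1) :=
                        Measure.addHaar_closedBall μ _ (Real.rpow_nonneg ht0.le _)
                    _ = ENNReal.ofReal (t ^ (-(d / (d - β)))) * μ (ball 0 1) := by
                        rw [← Real.rpow_natCast (t ^ (-(d - β)⁻¹)) _, ← Real.rpow_mul ht0.le]
                        rw [show (-(d - β)⁻¹) * (finrank ℝ E : ℝ) = -(d / (d - β)) by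
                          rw [← hd]; field_simp]
              _ = (∫⁻ t in Ioi (1:ℝ), ENNReal.ofReal (t ^ (-(d / (d - β))))) * μ (ball (0:E) 1) := by
                  rw [lintegral_mul_const'']
                  fun_prop
              _ ≤ ENNReal.ofReal (d / β) * μ (ball 0 1) := by
                  gcongr
                  rw [← ofReal_integral_eq_lintegral_ofReal
                    (integrableOn_Ioi_rpow_of_lt (by rw [neg_lt_neg_iff]; exact ha) one_pos)
                    ((ae_restrict_mem measurableSet_Ioi).mono fun t ht =>
                      Real.rpow_nonneg (le_of_lt (lt_trans one_pos ht)) _)]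
                  apply ENNReal.ofReal_le_ofReal
                  rw [integral_Ioi_rpow_of_lt (by rw [neg_lt_neg_iff]; exact ha) one_pos]
                  rw [Real.one_rpow]
                  have h9 : -(d / (d - β)) + 1 = -β / (d - β) := by field_simp; ring
                  rw [h9]
                  have h10 : (-1 : ℝ) / (-β / (d - β)) = (d - β) / β := by
                    rw [div_div_eq_mul_div]
                    rw [div_eq_div_iff (by linarith : -β ≠ 0) hβ.ne']
                    ring
                  rw [h10]
                  gcongr
                  linarith
      _ ≤ _ := by
          rw [mul_comm (ENNReal.ofReal (d / β)), mul_one, mul_add, mul_one]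

lemma near_bound' (μ : Measure E) [μ.IsAddHaarMeasure] {pm s : ℝ} (hpm : 0 < pm)
    (hs0 : 0 ≤ s) (hs1 : s < 1) :
    ENNReal.ofReal (s * (1 - s)) *
      ∫⁻ z in ball (0 : E) 1, ENNReal.ofReal (‖z‖ ^ ((1 - s) * pm - (finrank ℝ E : ℝ))) ∂μ ≤
    μ (ball 0 1) * (1 + ENNReal.ofReal ((finrank ℝ E : ℝ) / pm)) := by
  have h1s : 0 < 1 - s := by linarith
  have hβ : 0 < (1 - s) * pm := mul_pos h1s hpm
  calc ENNReal.ofReal (s * (1 - s)) *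
      ∫⁻ z in ball (0 : E) 1, ENNReal.ofReal (‖z‖ ^ ((1 - s) * pm - (finrank ℝ E : ℝ))) ∂μ
      ≤ ENNReal.ofReal (s * (1 - s)) *
        (μ (ball 0 1) * (1 + ENNReal.ofReal ((finrank ℝ E : ℝ) / ((1 - s) * pm)))) := by
        gcongr
        exact near_bound μ hβ
    _ = μ (ball 0 1) * (ENNReal.ofReal (s * (1 - s)) +
        ENNReal.ofReal (s * (1 - s)) * ENNReal.ofReal ((finrank ℝ E : ℝ) / ((1 - s) * pm))) := by
        ring
    _ ≤ μ (ball 0 1) * (1 + ENNReal.ofReal ((finrank ℝ E : ℝ) / pm)) := by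
        gcongr
        · exact ENNReal.ofReal_le_one.2 (by nlinarith)
        · rw [← ENNReal.ofReal_mul (by nlinarith)]
          apply ENNReal.ofReal_le_ofReal
          rw [show s * (1 - s) * ((finrank ℝ E : ℝ) / ((1 - s) * pm))
              = s * ((finrank ℝ E : ℝ) / pm) by field_simp]
          have : (0:ℝ) ≤ (finrank ℝ E : ℝ) / pm := by positivity
          nlinarith

lemma far_bound (μ : Measure E) [μ.IsAddHaarMeasure] {α : ℝ} (hα : 0 < α) :
    ∫⁻ z in (ball (0 : E) 1)ᶜ, ENNReal.ofReal (‖z‖ ^ (-α)) ∂μ ≤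
      ENNReal.ofReal (2 ^ α) * ∫⁻ z : E, ENNReal.ofReal ((1 + ‖z‖) ^ (-α)) ∂μ := by
  have h2 : (0:ℝ) < 2 ^ α := Real.rpow_pos_of_pos two_pos _
  calc ∫⁻ z in (ball (0 : E) 1)ᶜ, ENNReal.ofReal (‖z‖ ^ (-α)) ∂μ
      ≤ ∫⁻ z in (ball (0 : E) 1)ᶜ, ENNReal.ofReal (2 ^ α * (1 + ‖z‖) ^ (-α)) ∂μ := by
        apply lintegral_mono_ae
        filter_upwards [ae_restrict_mem measurableSet_ball.compl] with z hz
        rw [mem_compl_iff, mem_ball_zero_iff, not_lt] at hz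
        apply ENNReal.ofReal_le_ofReal
        have hz0 : (0:ℝ) < ‖z‖ := lt_of_lt_of_le one_pos hz
        have hhalf : (1 + ‖z‖) / 2 ≤ ‖z‖ := by linarith
        have hpos : (0:ℝ) < (1 + ‖z‖) / 2 := by linarith
        calc ‖z‖ ^ (-α) ≤ ((1 + ‖z‖) / 2) ^ (-α) :=
              Real.rpow_le_rpow_of_nonpos hpos hhalf (by linarith)
          _ = 2 ^ α * (1 + ‖z‖) ^ (-α) := by
              rw [Real.div_rpow (by linarith) (by norm_num),
                Real.rpow_neg (by norm_num : (0:ℝ) ≤ 2), div_inv_eq_mul, mul_comm]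
    _ ≤ ∫⁻ z : E, ENNReal.ofReal (2 ^ α * (1 + ‖z‖) ^ (-α)) ∂μ :=
        setLIntegral_le_lintegral _ _
    _ = ENNReal.ofReal (2 ^ α) * ∫⁻ z : E, ENNReal.ofReal ((1 + ‖z‖) ^ (-α)) ∂μ := by
        rw [← lintegral_const_mul' _ _ ENNReal.ofReal_ne_top]
        congr 1 with z
        rw [ENNReal.ofReal_mul h2.le]


set_option maxHeartbeats 1000000 in
/-- **Lemma 3.3 (domination)**: for `u ∈ C¹_c(ℝⁿ)` and `s₀ ∈ (0,1)` there is `F ∈ L¹(Ω)`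
dominating `F_s(x) = s(1-s) ∫_Ω |u(x)-u(y)|^{p(x,y)}/|x-y|^{n+sp(x,y)} dy` for all
`x ∈ Ω` and `s ∈ [s₀,1)`. -/
theorem dominating_function_exists
    (n : ℕ) (hn : 1 ≤ n)
    (Ω : Set (EuclideanSpace ℝ (Fin n))) (hΩ : IsOpen Ω)
    (p : EuclideanSpace ℝ (Fin n) → EuclideanSpace ℝ (Fin n) → ℝ)
    (hp_meas : Measurable (Function.uncurry p))
    (pm pp : ℝ) (hpm : 1 < pm) (hpmpp : pm ≤ pp)
    (hp_bound : ∀ x ∈ Ω, ∀ y ∈ Ω, pm ≤ p x y ∧ p x y ≤ pp)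
    (s₀ : ℝ) (hs₀ : s₀ ∈ Set.Ioo (0 : ℝ) 1)
    (u : EuclideanSpace ℝ (Fin n) → ℝ)
    (hu : ContDiff ℝ 1 u) (hu_supp : HasCompactSupport u) :
    ∃ F : EuclideanSpace ℝ (Fin n) → ℝ, IntegrableOn F Ω volume ∧
      ∀ x ∈ Ω, ∀ s : ℝ, s₀ ≤ s → s < 1 →
        ENNReal.ofReal (s * (1 - s)) *
            (∫⁻ y in Ω, ENNReal.ofReal
              (|u x - u y| ^ p x y / ‖x - y‖ ^ ((n : ℝ) + s * p x y))) ≤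
          ENNReal.ofReal (F x) := by
  obtain ⟨hs₀0, hs₀1⟩ := hs₀
  have hpm0 : (0:ℝ) < pm := by linarith
  have hfr : (finrank ℝ (EuclideanSpace ℝ (Fin n)) : ℝ) = (n : ℝ) := by
    rw [finrank_euclideanSpace_fin]
  obtain ⟨R, hR0, hKR⟩ := (hu_supp.isBounded).subset_closedBall_lt 0 0
  obtain ⟨M, hM⟩ := hu.continuous.bounded_above_of_compact_support hu_supp
  have hM0 : (0:ℝ) ≤ M := le_trans (norm_nonneg _) (hM 0)
  obtain ⟨Lf, hLf⟩ := (hu.continuous_fderiv one_ne_zero).bounded_above_of_compact_support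
    (hu_supp.fderiv (𝕜 := ℝ))
  have hLip : LipschitzWith (Real.toNNReal Lf) u := by
    have hLf0 : (0:ℝ) ≤ Lf := le_trans (norm_nonneg _) (hLf 0)
    refine lipschitzWith_of_nnnorm_fderiv_le (𝕜 := ℝ) (hu.differentiable one_ne_zero) fun x => ?_
    exact (Real.le_toNNReal_iff_coe_le hLf0).2 (by rw [coe_nnnorm]; exact hLf x)
  set LL : ℝ := (Real.toNNReal Lf : ℝ) with hLLdef
  have hLL0 : 0 ≤ LL := (Real.toNNReal Lf).coe_nonneg
  have hLipR : ∀ a b, |u a - u b| ≤ LL * ‖a - b‖ := by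
    intro a b
    have := hLip.dist_le_mul a b
    rwa [Real.dist_eq, dist_eq_norm] at this
  set α : ℝ := n + s₀ * pm with hαdef
  have hnα : (n:ℝ) < α := by nlinarith
  have hα0 : (0:ℝ) < α := lt_of_le_of_lt (Nat.cast_nonneg n) hnα
  set C₁ : ℝ := (LL + 1) ^ pp with hC₁def
  set C₂ : ℝ := (2 * M + 1) ^ pp with hC₂def
  have hC₁0 : (0:ℝ) < C₁ := Real.rpow_pos_of_pos (by linarith) _
  have hC₂0 : (0:ℝ) < C₂ := Real.rpow_pos_of_pos (by linarith) _
  set D : ℝ≥0∞ := ∫⁻ z : EuclideanSpace ℝ (Fin n), ENNReal.ofReal ((1 + ‖z‖) ^ (-α)) with hDdef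
  have hD : D ≠ ∞ := (finite_integral_one_add_norm (by rw [hfr]; exact hnα)).ne
  set volB := volume (ball (0 : EuclideanSpace ℝ (Fin n)) 1) with hvolBdef
  have hvolB : volB ≠ ∞ := measure_ball_lt_top.ne
  set T : ℝ≥0∞ := ENNReal.ofReal C₁ * (volB * (1 + ENNReal.ofReal ((n:ℝ)/pm))) +
    ENNReal.ofReal C₂ * (ENNReal.ofReal (2 ^ α) * D) with hTdef
  have hT : T ≠ ∞ := by
    apply ENNReal.add_ne_top.2
    constructor
    · exact ENNReal.mul_ne_top ENNReal.ofReal_ne_top (ENNReal.mul_ne_top hvolB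
        (ENNReal.add_ne_top.2 ⟨ENNReal.one_ne_top, ENNReal.ofReal_ne_top⟩))
    · exact ENNReal.mul_ne_top ENNReal.ofReal_ne_top
        (ENNReal.mul_ne_top ENNReal.ofReal_ne_top hD)
  set VK : ℝ := (volume (closedBall (0 : EuclideanSpace ℝ (Fin n)) R)).toReal with hVKdef
  have hVK0 : 0 ≤ VK := ENNReal.toReal_nonneg
  set A : ℝ := max (T.toReal * (R+3) ^ α) (C₂ * VK * ((R+3)/2) ^ α) with hAdef
  have hA0 : 0 ≤ A := le_trans (by positivity) (le_max_left _ _)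
  refine ⟨fun x => A * (1 + ‖x‖) ^ (-α), ?_, ?_⟩
  · exact ((integrable_one_add_norm (by rw [hfr]; exact hnα)).const_mul A).integrableOn
  intro x hx s hss₀ hs1
  have hs0 : 0 < s := lt_of_lt_of_le hs₀0 hss₀
  have hs10 : 0 < 1 - s := by linarith
  have hss1 : 0 ≤ s * (1 - s) := by nlinarith
  have hssle1 : ENNReal.ofReal (s * (1 - s)) ≤ 1 := ENNReal.ofReal_le_one.2 (by nlinarith)
  by_cases hxR : ‖x‖ ≤ R + 2
  · -- near case
    set ψ : EuclideanSpace ℝ (Fin n) → ℝ≥0∞ := fun z =>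
      (ball (0 : EuclideanSpace ℝ (Fin n)) 1).indicator
        (fun z => ENNReal.ofReal (C₁ * ‖z‖ ^ ((1 - s) * pm - (n:ℝ)))) z +
      (ball (0 : EuclideanSpace ℝ (Fin n)) 1)ᶜ.indicator
        (fun z => ENNReal.ofReal (C₂ * ‖z‖ ^ (-α))) z with hψdef
    have hm1 : Measurable fun z : EuclideanSpace ℝ (Fin n) =>
        ENNReal.ofReal (C₁ * ‖z‖ ^ ((1 - s) * pm - (n:ℝ))) := by fun_prop
    have hψmeas : Measurable ψ := by
      apply Measurable.add
      · exact hm1.indicator measurableSet_ball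
      · apply Measurable.indicator _ measurableSet_ball.compl
        fun_prop
    have key : ∀ y ∈ Ω, ENNReal.ofReal
        (|u x - u y| ^ p x y / ‖x - y‖ ^ ((n : ℝ) + s * p x y)) ≤ ψ (x - y) := by
      intro y hy
      obtain ⟨hq1, hq2⟩ := hp_bound x hx y hy
      have hq0 : (0:ℝ) < p x y := by linarith
      by_cases hxy : ‖x - y‖ < 1
      · have hψval : ψ (x - y) = ENNReal.ofReal (C₁ * ‖x - y‖ ^ ((1 - s) * pm - (n:ℝ))) := by
          rw [hψdef]
          simp only [indicator_of_mem (mem_ball_zero_iff.2 hxy),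
            indicator_of_notMem (notMem_compl_iff.2 (mem_ball_zero_iff.2 hxy)), add_zero]
        rw [hψval]
        by_cases hx0 : x = y
        · subst hx0
          rw [sub_self, abs_zero, Real.zero_rpow hq0.ne', zero_div, ENNReal.ofReal_zero]
          exact zero_le
        · have hr0 : (0:ℝ) < ‖x - y‖ := by
            rw [norm_pos_iff, sub_ne_zero]; exact hx0
          apply ENNReal.ofReal_le_ofReal
          have hden : (0:ℝ) < ‖x - y‖ ^ ((n:ℝ) + s * p x y) := Real.rpow_pos_of_pos hr0 _
          calc |u x - u y| ^ p x y / ‖x - y‖ ^ ((n:ℝ) + s * p x y)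
              ≤ (LL ^ p x y * ‖x - y‖ ^ p x y) / ‖x - y‖ ^ ((n:ℝ) + s * p x y) := by
                gcongr
                rw [← Real.mul_rpow hLL0 (norm_nonneg _)]
                exact Real.rpow_le_rpow (abs_nonneg _) (hLipR x y) hq0.le
            _ = LL ^ p x y * ‖x - y‖ ^ ((1 - s) * p x y - (n:ℝ)) := by
                rw [mul_div_assoc, ← Real.rpow_sub hr0]
                congr 1
                ring_nf
            _ ≤ C₁ * ‖x - y‖ ^ ((1 - s) * pm - (n:ℝ)) := by
                apply mul_le_mul
                · calc LL ^ p x y ≤ (LL + 1) ^ p x y :=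
                      Real.rpow_le_rpow hLL0 (by linarith) hq0.le
                    _ ≤ (LL + 1) ^ pp :=
                      Real.rpow_le_rpow_of_exponent_le (by linarith) (by linarith)
                · apply Real.rpow_le_rpow_of_exponent_ge hr0 hxy.le
                  have : (1 - s) * pm ≤ (1 - s) * p x y :=
                    mul_le_mul_of_nonneg_left hq1 hs10.le
                  linarith
                · exact Real.rpow_nonneg (norm_nonneg _) _
                · exact hC₁0.le
      · have hr1 : (1:ℝ) ≤ ‖x - y‖ := not_lt.1 hxy
        have hr0 : (0:ℝ) < ‖x - y‖ := lt_of_lt_of_le one_pos hr1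
        have hψval : ψ (x - y) = ENNReal.ofReal (C₂ * ‖x - y‖ ^ (-α)) := by
          rw [hψdef]
          have hmem : x - y ∉ ball (0 : EuclideanSpace ℝ (Fin n)) 1 := by
            rw [mem_ball_zero_iff]; exact hxy
          simp only [indicator_of_notMem hmem, indicator_of_mem (mem_compl hmem), zero_add]
        rw [hψval]
        apply ENNReal.ofReal_le_ofReal
        have hnum : |u x - u y| ^ p x y ≤ C₂ := by
          calc |u x - u y| ^ p x y ≤ (2 * M + 1) ^ p x y := by
                apply Real.rpow_le_rpow (abs_nonneg _) _ hq0.le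
                calc |u x - u y| = ‖u x - u y‖ := (Real.norm_eq_abs _).symm
                  _ ≤ ‖u x‖ + ‖u y‖ := norm_sub_le _ _
                  _ ≤ 2 * M + 1 := by have := hM x; have := hM y; linarith
            _ ≤ C₂ := Real.rpow_le_rpow_of_exponent_le (by linarith) (by linarith)
        calc |u x - u y| ^ p x y / ‖x - y‖ ^ ((n:ℝ) + s * p x y)
            ≤ C₂ / ‖x - y‖ ^ ((n:ℝ) + s * p x y) := by
              gcongr
          _ ≤ C₂ / ‖x - y‖ ^ α := by
              apply div_le_div_of_nonneg_left hC₂0.le (Real.rpow_pos_of_pos hr0 _)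
              apply Real.rpow_le_rpow_of_exponent_le hr1
              have : s₀ * pm ≤ s * p x y := by nlinarith
              rw [hαdef]; linarith
          _ = C₂ * ‖x - y‖ ^ (-α) := by
              rw [Real.rpow_neg hr0.le, div_eq_mul_inv]
    -- split the integral of ψ
    have hIψ : ∫⁻ z, ψ z =
        (∫⁻ z in ball (0 : EuclideanSpace ℝ (Fin n)) 1,
          ENNReal.ofReal (C₁ * ‖z‖ ^ ((1 - s) * pm - (n:ℝ)))) +
        ∫⁻ z in (ball (0 : EuclideanSpace ℝ (Fin n)) 1)ᶜ,
          ENNReal.ofReal (C₂ * ‖z‖ ^ (-α)) := by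
      rw [hψdef]
      rw [lintegral_add_left (hm1.indicator measurableSet_ball)]
      rw [lintegral_indicator measurableSet_ball, lintegral_indicator measurableSet_ball.compl]
    have hnear : ENNReal.ofReal (s * (1 - s)) *
        ∫⁻ z in ball (0 : EuclideanSpace ℝ (Fin n)) 1,
          ENNReal.ofReal (C₁ * ‖z‖ ^ ((1 - s) * pm - (n:ℝ))) ≤
        ENNReal.ofReal C₁ * (volB * (1 + ENNReal.ofReal ((n:ℝ)/pm))) := by
      have hpull : (∫⁻ z in ball (0 : EuclideanSpace ℝ (Fin n)) 1,
          ENNReal.ofReal (C₁ * ‖z‖ ^ ((1 - s) * pm - (n:ℝ)))) =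
          ENNReal.ofReal C₁ * ∫⁻ z in ball (0 : EuclideanSpace ℝ (Fin n)) 1,
            ENNReal.ofReal (‖z‖ ^ ((1 - s) * pm - (n:ℝ))) := by
        rw [← lintegral_const_mul' _ _ ENNReal.ofReal_ne_top]
        congr 1 with z
        rw [ENNReal.ofReal_mul hC₁0.le]
      rw [hpull, mul_left_comm]
      apply mul_le_mul_right
      have hnear' := near_bound' (volume : Measure (EuclideanSpace ℝ (Fin n)))
        hpm0 hs0.le hs1
      rw [hfr] at hnear'
      exact hnear'
    have hfar : (∫⁻ z in (ball (0 : EuclideanSpace ℝ (Fin n)) 1)ᶜ,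
        ENNReal.ofReal (C₂ * ‖z‖ ^ (-α))) ≤
        ENNReal.ofReal C₂ * (ENNReal.ofReal (2 ^ α) * D) := by
      have hpull : (∫⁻ z in (ball (0 : EuclideanSpace ℝ (Fin n)) 1)ᶜ,
          ENNReal.ofReal (C₂ * ‖z‖ ^ (-α))) =
          ENNReal.ofReal C₂ * ∫⁻ z in (ball (0 : EuclideanSpace ℝ (Fin n)) 1)ᶜ,
            ENNReal.ofReal (‖z‖ ^ (-α)) := by
        rw [← lintegral_const_mul' _ _ ENNReal.ofReal_ne_top]
        congr 1 with z
        rw [ENNReal.ofReal_mul hC₂0.le]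
      rw [hpull]
      exact mul_le_mul_right (far_bound _ hα0) _
    have hTbound : ENNReal.ofReal (s * (1 - s)) *
        (∫⁻ y in Ω, ENNReal.ofReal
          (|u x - u y| ^ p x y / ‖x - y‖ ^ ((n : ℝ) + s * p x y))) ≤ T := by
      calc ENNReal.ofReal (s * (1 - s)) *
          (∫⁻ y in Ω, ENNReal.ofReal
            (|u x - u y| ^ p x y / ‖x - y‖ ^ ((n : ℝ) + s * p x y)))
          ≤ ENNReal.ofReal (s * (1 - s)) * ∫⁻ y in Ω, ψ (x - y) :=
            mul_le_mul_right
              (lintegral_mono_ae ((ae_restrict_iff' hΩ.measurableSet).2 (ae_of_all _ key))) _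
        _ ≤ ENNReal.ofReal (s * (1 - s)) * ∫⁻ y, ψ (x - y) :=
            mul_le_mul_right (setLIntegral_le_lintegral _ _) _
        _ = ENNReal.ofReal (s * (1 - s)) * ∫⁻ z, ψ z := by
            congr 1
            exact (Measure.measurePreserving_sub_left volume x).lintegral_comp hψmeas
        _ ≤ T := by
            rw [hIψ, mul_add, hTdef]
            apply add_le_add hnear
            calc ENNReal.ofReal (s * (1 - s)) *
                ∫⁻ z in (ball (0 : EuclideanSpace ℝ (Fin n)) 1)ᶜ,
                  ENNReal.ofReal (C₂ * ‖z‖ ^ (-α))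
                ≤ 1 * ∫⁻ z in (ball (0 : EuclideanSpace ℝ (Fin n)) 1)ᶜ,
                  ENNReal.ofReal (C₂ * ‖z‖ ^ (-α)) := mul_le_mul_left hssle1 _
              _ ≤ ENNReal.ofReal C₂ * (ENNReal.ofReal (2 ^ α) * D) := by
                  rw [one_mul]; exact hfar
    refine hTbound.trans ?_
    rw [← ENNReal.ofReal_toReal hT]
    apply ENNReal.ofReal_le_ofReal
    have h1x : (0:ℝ) < 1 + ‖x‖ := by positivity
    have hstep : (R+3) ^ (-α) ≤ (1 + ‖x‖) ^ (-α) :=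
      Real.rpow_le_rpow_of_nonpos h1x (by linarith) (by linarith)
    calc T.toReal = (T.toReal * (R+3) ^ α) * (R+3) ^ (-α) := by
          rw [mul_assoc, ← Real.rpow_add (by linarith), add_neg_cancel, Real.rpow_zero, mul_one]
      _ ≤ A * (1 + ‖x‖) ^ (-α) := by
          apply mul_le_mul (le_max_left _ _) hstep (Real.rpow_nonneg (by linarith) _) hA0
  · -- far case : ‖x‖ > R + 2
    push_neg at hxR
    have hux : u x = 0 := by
      apply image_eq_zero_of_notMem_tsupport
      intro hmem
      have := hKR hmem
      rw [mem_closedBall_zero_iff] at this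
      linarith
    have key2 : ∀ y ∈ Ω, ENNReal.ofReal
        (|u x - u y| ^ p x y / ‖x - y‖ ^ ((n : ℝ) + s * p x y)) ≤
        (closedBall (0 : EuclideanSpace ℝ (Fin n)) R).indicator
          (fun _ => ENNReal.ofReal (C₂ * (‖x‖ - R) ^ (-α))) y := by
      intro y hy
      obtain ⟨hq1, hq2⟩ := hp_bound x hx y hy
      have hq0 : (0:ℝ) < p x y := by linarith
      by_cases huy : u y = 0
      · rw [hux, huy, sub_self, abs_zero, Real.zero_rpow hq0.ne', zero_div,
          ENNReal.ofReal_zero]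
        exact zero_le
      · have hyK : y ∈ tsupport u := subset_tsupport u (Function.mem_support.2 huy)
        have hyR : ‖y‖ ≤ R := mem_closedBall_zero_iff.1 (hKR hyK)
        rw [indicator_of_mem (mem_closedBall_zero_iff.2 hyR)]
        have hxRpos : (0:ℝ) < ‖x‖ - R := by linarith
        have hr : ‖x‖ - R ≤ ‖x - y‖ := by
          have := norm_sub_norm_le x y
          linarith
        have hr1 : (1:ℝ) ≤ ‖x - y‖ := by linarith
        have hr0 : (0:ℝ) < ‖x - y‖ := by linarith
        apply ENNReal.ofReal_le_ofReal
        have hnum : |u x - u y| ^ p x y ≤ C₂ := by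
          calc |u x - u y| ^ p x y ≤ (2 * M + 1) ^ p x y := by
                apply Real.rpow_le_rpow (abs_nonneg _) _ hq0.le
                calc |u x - u y| = ‖u x - u y‖ := (Real.norm_eq_abs _).symm
                  _ ≤ ‖u x‖ + ‖u y‖ := norm_sub_le _ _
                  _ ≤ 2 * M + 1 := by have := hM x; have := hM y; linarith
            _ ≤ C₂ := Real.rpow_le_rpow_of_exponent_le (by linarith) (by linarith)
        calc |u x - u y| ^ p x y / ‖x - y‖ ^ ((n:ℝ) + s * p x y)
            ≤ C₂ / ‖x - y‖ ^ ((n:ℝ) + s * p x y) := by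
              gcongr
          _ ≤ C₂ / ‖x - y‖ ^ α := by
              apply div_le_div_of_nonneg_left hC₂0.le (Real.rpow_pos_of_pos hr0 _)
              apply Real.rpow_le_rpow_of_exponent_le hr1
              have : s₀ * pm ≤ s * p x y := by nlinarith
              rw [hαdef]; linarith
          _ ≤ C₂ / (‖x‖ - R) ^ α := by
              apply div_le_div_of_nonneg_left hC₂0.le (Real.rpow_pos_of_pos hxRpos _)
              exact Real.rpow_le_rpow hxRpos.le hr hα0.le
          _ = C₂ * (‖x‖ - R) ^ (-α) := by
              rw [Real.rpow_neg hxRpos.le, div_eq_mul_inv]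
    have hxRpos : (0:ℝ) < ‖x‖ - R := by linarith
    have hbound2 : ENNReal.ofReal (s * (1 - s)) *
        (∫⁻ y in Ω, ENNReal.ofReal
          (|u x - u y| ^ p x y / ‖x - y‖ ^ ((n : ℝ) + s * p x y))) ≤
        ENNReal.ofReal (C₂ * (‖x‖ - R) ^ (-α) * VK) := by
      calc ENNReal.ofReal (s * (1 - s)) *
          (∫⁻ y in Ω, ENNReal.ofReal
            (|u x - u y| ^ p x y / ‖x - y‖ ^ ((n : ℝ) + s * p x y)))
          ≤ 1 * ∫⁻ y in Ω, (closedBall (0 : EuclideanSpace ℝ (Fin n)) R).indicator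
              (fun _ => ENNReal.ofReal (C₂ * (‖x‖ - R) ^ (-α))) y :=
            mul_le_mul' hssle1
              (lintegral_mono_ae ((ae_restrict_iff' hΩ.measurableSet).2 (ae_of_all _ key2)))
        _ ≤ ∫⁻ y, (closedBall (0 : EuclideanSpace ℝ (Fin n)) R).indicator
              (fun _ => ENNReal.ofReal (C₂ * (‖x‖ - R) ^ (-α))) y := by
            rw [one_mul]
            exact setLIntegral_le_lintegral _ _
        _ = ENNReal.ofReal (C₂ * (‖x‖ - R) ^ (-α)) *
              volume (closedBall (0 : EuclideanSpace ℝ (Fin n)) R) :=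
            lintegral_indicator_const measurableSet_closedBall _
        _ = ENNReal.ofReal (C₂ * (‖x‖ - R) ^ (-α) * VK) := by
            rw [ENNReal.ofReal_mul (by positivity : (0:ℝ) ≤ C₂ * (‖x‖ - R) ^ (-α))]
            congr 1
            rw [hVKdef]
            exact (ENNReal.ofReal_toReal measure_closedBall_lt_top.ne).symm
    refine hbound2.trans ?_
    apply ENNReal.ofReal_le_ofReal
    have h1x : (0:ℝ) < 1 + ‖x‖ := by positivity
    have hc : (0:ℝ) < (R+3)/2 := by linarith
    have hkey : 1 + ‖x‖ ≤ ((R+3)/2) * (‖x‖ - R) := by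
      nlinarith [mul_nonneg (by linarith : (0:ℝ) ≤ R+1)
        (by linarith : (0:ℝ) ≤ ‖x‖ - (R+2))]
    have hdecay : (‖x‖ - R) ^ (-α) ≤ ((R+3)/2) ^ α * (1 + ‖x‖) ^ (-α) := by
      calc (‖x‖ - R) ^ (-α) ≤ ((1 + ‖x‖) / ((R+3)/2)) ^ (-α) := by
            apply Real.rpow_le_rpow_of_nonpos (by positivity) _ (by linarith)
            rw [div_le_iff₀ hc]
            linarith [hkey]
        _ = ((R+3)/2) ^ α * (1 + ‖x‖) ^ (-α) := by
            rw [Real.div_rpow h1x.le hc.le, Real.rpow_neg hc.le, div_inv_eq_mul, mul_comm]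
    calc C₂ * (‖x‖ - R) ^ (-α) * VK
        ≤ C₂ * (((R+3)/2) ^ α * (1 + ‖x‖) ^ (-α)) * VK := by gcongr
      _ = (C₂ * VK * ((R+3)/2) ^ α) * (1 + ‖x‖) ^ (-α) := by ring
      _ ≤ A * (1 + ‖x‖) ^ (-α) := by
          apply mul_le_mul_of_nonneg_right (le_max_right _ _) (Real.rpow_nonneg h1x.le _)
end

section
/- Let n ≥ 2 be an integer and let Ω ⊆ ℝⁿ be an open set containing the closed ball B̄₂ of radius 2 centered at the origin. Then there exist a smooth function p : Ω × Ω → ℝ satisfying (P) with p̄(x) := p(x,x) constant, and a function u : Ω → ℝ, smooth on Ω \ {0}, such that: (i) ∫_Ω |u(x)|^{p̄} dx < ∞ and ∫_{Ω\{0}} |∇u(x)|^{p̄} dx < ∞ (so u ∈ W^{1,p̄}(Ω)); and (ii) for every s ∈ (0,1) and every λ > 0, s(1−s) ∫_Ω ∫_Ω |u(x)/λ − u(y)/λ|^{p(x,y)} / |x−y|^{n+s·p(x,y)} dy dx = +∞ (so u ∉ W^{s,p(·,·)}(Ω) for every s ∈ (0,1)). -/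
open MeasureTheory Filter Metric Set
open scoped ENNReal Topology

/-- The constant `K_{n,p} = 2 π^{(n-1)/2} Γ((p+1)/2) / (p Γ((n+p)/2))`. -/
noncomputable def Kconst (n : ℕ) (q : ℝ) : ℝ :=
  2 * Real.pi ^ (((n : ℝ) - 1) / 2) * Real.Gamma ((q + 1) / 2) /
    (q * Real.Gamma (((n : ℝ) + q) / 2))

/-- The modular `ϱ_{s,p}(u) = s(1-s) ∫_Ω ∫_Ω |u(x)-u(y)|^{p(x,y)} / |x-y|^{n+s p(x,y)} dy dx`,
as a Lebesgue integral with values in `[0,∞]`. -/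
noncomputable def varModular (n : ℕ) (Ω : Set (EuclideanSpace ℝ (Fin n)))
    (p : EuclideanSpace ℝ (Fin n) → EuclideanSpace ℝ (Fin n) → ℝ) (s : ℝ)
    (u : EuclideanSpace ℝ (Fin n) → ℝ) : ℝ≥0∞ :=
  ENNReal.ofReal (s * (1 - s)) *
    ∫⁻ x in Ω, ∫⁻ y in Ω,
      ENNReal.ofReal (|u x - u y| ^ p x y / ‖x - y‖ ^ ((n : ℝ) + s * p x y))

set_option synthInstance.maxHeartbeats 1000000
set_option maxHeartbeats 4000000
set_option linter.unnecessarySeqFocus false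

section Aux

private lemma rpow_anti {a b r : ℝ} (ha : 0 < a) (hab : a ≤ b) (hr : 0 ≤ r) :
    b ^ (-r) ≤ a ^ (-r) := by
  have hb : 0 < b := ha.trans_le hab
  rw [Real.rpow_neg ha.le, Real.rpow_neg hb.le]
  exact inv_anti₀ (Real.rpow_pos_of_pos ha r) (Real.rpow_le_rpow ha.le hab hr)

private lemma div_lemma (n : ℕ) (hn : 1 ≤ n) {ρ C : ℝ} (hρ : 0 < ρ) (hC : 0 < C) :
    ∫⁻ x in ball (0 : EuclideanSpace ℝ (Fin n)) ρ,
      ENNReal.ofReal (C * ‖x‖ ^ (-(n : ℝ))) = ⊤ := by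
  classical
  obtain ⟨r, hrdef⟩ : ∃ r : ℕ → ℝ, ∀ k, r k = ρ * (2⁻¹ : ℝ) ^ k := ⟨_, fun _ => rfl⟩
  have hrpos : ∀ k, 0 < r k := fun k => by rw [hrdef]; positivity
  have hrmono : ∀ {k l : ℕ}, k ≤ l → r l ≤ r k := fun {k l} h => by
    rw [hrdef, hrdef]
    exact mul_le_mul_of_nonneg_left
      (pow_le_pow_of_le_one (by norm_num) (by norm_num) h) hρ.le
  set A : ℕ → Set (EuclideanSpace ℝ (Fin n)) :=
    fun k => ball (0 : EuclideanSpace ℝ (Fin n)) (r k) \ ball 0 (r (k + 1)) with hA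
  have hAm : ∀ k, MeasurableSet (A k) := fun k => measurableSet_ball.diff measurableSet_ball
  have hAd : Pairwise (Function.onFun Disjoint A) := by
    have key : ∀ {k l : ℕ}, k < l → Disjoint (A k) (A l) := by
      intro k l hkl
      refine Set.disjoint_left.2 fun x hxk hxl => ?_
      exact hxk.2 (ball_subset_ball (hrmono hkl) hxl.1)
    intro k l hkl
    rcases hkl.lt_or_gt with h | h
    · exact key h
    · exact (key h).symm
  have hsub : (⋃ k, A k) ⊆ ball (0 : EuclideanSpace ℝ (Fin n)) ρ := by
    refine iUnion_subset fun k => ?_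
    have h0 : r 0 = ρ := by rw [hrdef]; simp
    exact diff_subset.trans (ball_subset_ball (h0 ▸ hrmono (Nat.zero_le k)))
  haveI : Nonempty (Fin n) := ⟨⟨0, by omega⟩⟩
  haveI : Nontrivial (EuclideanSpace ℝ (Fin n)) :=
    nontrivial_of_ne (EuclideanSpace.single ⟨0, by omega⟩ (1:ℝ)) 0 (by
      intro h
      have := congrArg norm h
      rw [EuclideanSpace.norm_single, norm_zero] at this
      norm_num at this)
  set v := volume (ball (0 : EuclideanSpace ℝ (Fin n)) 1) with hv
  have hvlt : v < ⊤ := measure_ball_lt_top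
  have hvne : v ≠ 0 := (measure_ball_pos volume _ one_pos).ne'
  have hballvol : ∀ k, volume (ball (0 : EuclideanSpace ℝ (Fin n)) (r k))
      = ENNReal.ofReal ((r k) ^ n) * v := by
    intro k
    rw [Measure.addHaar_ball _ _ (hrpos k).le, finrank_euclideanSpace_fin]
  set ε : ℝ≥0∞ := ENNReal.ofReal (C * (1 - (2⁻¹ : ℝ) ^ n)) * v with hε
  have hεne : ε ≠ 0 := by
    have h1 : (2⁻¹ : ℝ) ^ n < 1 :=
      pow_lt_one₀ (by norm_num) (by norm_num) (by omega)
    exact mul_ne_zero (by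
      simp only [ne_eq, ENNReal.ofReal_eq_zero, not_le]
      nlinarith) hvne
  have hterm : ∀ k, ε ≤ ∫⁻ x in A k, ENNReal.ofReal (C * ‖x‖ ^ (-(n : ℝ))) := by
    intro k
    have hAvol : volume (A k) = ENNReal.ofReal ((r k) ^ n - (r (k+1)) ^ n) * v := by
      rw [hA]
      rw [measure_diff (ball_subset_ball (hrmono (Nat.le_succ k)))
        measurableSet_ball.nullMeasurableSet measure_ball_lt_top.ne,
        hballvol, hballvol, ← ENNReal.sub_mul (fun _ _ => hvlt.ne),
        ← ENNReal.ofReal_sub _ (pow_nonneg (hrpos _).le n)]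
    have hconst : ε = ENNReal.ofReal (C * (r k) ^ (-(n : ℝ))) * volume (A k) := by
      rw [hAvol, ← mul_assoc, ← ENNReal.ofReal_mul (mul_nonneg hC.le (Real.rpow_nonneg (hrpos k).le _)), hε]
      congr 2
      have h1 : (r k) ^ (-(n : ℝ)) = ((r k) ^ n)⁻¹ := by
        rw [Real.rpow_neg (hrpos k).le, Real.rpow_natCast]
      have h2 : r (k + 1) = r k * 2⁻¹ := by
        rw [hrdef, hrdef, pow_succ]; ring
      have h3 : ((r k) ^ n : ℝ) ≠ 0 := (pow_pos (hrpos k) n).ne'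
      rw [h1, h2, mul_pow]
      generalize hgen : ((r k) ^ n : ℝ) = t at h3 ⊢
      field_simp
    rw [hconst]
    rw [← setLIntegral_const (A k) _]
    refine setLIntegral_mono' (hAm k) fun x hx => ?_
    have hx2 : r (k + 1) ≤ ‖x‖ := by
      have := hx.2
      simpa [mem_ball_zero_iff, not_lt] using this
    have hx1 : ‖x‖ ≤ r k := (mem_ball_zero_iff.1 hx.1).le
    have hx0 : 0 < ‖x‖ := lt_of_lt_of_le (hrpos (k+1)) hx2
    exact ENNReal.ofReal_le_ofReal
      (mul_le_mul_of_nonneg_left (rpow_anti hx0 hx1 (by positivity)) hC.le)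
  refine top_le_iff.1 ?_
  calc (⊤ : ℝ≥0∞) = ∑' _ : ℕ, ε := (ENNReal.tsum_const_eq_top_of_ne_zero hεne).symm
    _ ≤ ∑' k, ∫⁻ x in A k, ENNReal.ofReal (C * ‖x‖ ^ (-(n : ℝ))) :=
        ENNReal.tsum_le_tsum hterm
    _ = ∫⁻ x in ⋃ k, A k, ENNReal.ofReal (C * ‖x‖ ^ (-(n : ℝ))) :=
        (lintegral_iUnion hAm hAd _).symm
    _ ≤ _ := lintegral_mono_set hsub

private lemma fin_lemma (n : ℕ) {R C q : ℝ} (hR : 0 < R) (hC : 0 ≤ C) (hq : 0 ≤ q)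
    (hqn : q < n) :
    ∫⁻ x in ball (0 : EuclideanSpace ℝ (Fin n)) R,
      ENNReal.ofReal (C * ‖x‖ ^ (-q)) < ⊤ := by
  classical
  have hn : 1 ≤ n := by
    by_contra h
    push_neg at h
    interval_cases n <;> simp_all <;> linarith
  obtain ⟨r, hrdef⟩ : ∃ r : ℕ → ℝ, ∀ k, r k = R * (2⁻¹ : ℝ) ^ k := ⟨_, fun _ => rfl⟩
  have hrpos : ∀ k, 0 < r k := fun k => by rw [hrdef]; positivity
  have hrmono : ∀ {k l : ℕ}, k ≤ l → r l ≤ r k := fun {k l} h => by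
    rw [hrdef, hrdef]
    exact mul_le_mul_of_nonneg_left
      (pow_le_pow_of_le_one (by norm_num) (by norm_num) h) hR.le
  set A : ℕ → Set (EuclideanSpace ℝ (Fin n)) :=
    fun k => ball (0 : EuclideanSpace ℝ (Fin n)) (r k) \ ball 0 (r (k + 1)) with hA
  have hAm : ∀ k, MeasurableSet (A k) := fun k => measurableSet_ball.diff measurableSet_ball
  have hAd : Pairwise (Function.onFun Disjoint A) := by
    have key : ∀ {k l : ℕ}, k < l → Disjoint (A k) (A l) := by
      intro k l hkl
      refine Set.disjoint_left.2 fun x hxk hxl => ?_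
      exact hxk.2 (ball_subset_ball (hrmono hkl) hxl.1)
    intro k l hkl
    rcases hkl.lt_or_gt with h | h
    · exact key h
    · exact (key h).symm
  haveI : Nonempty (Fin n) := ⟨⟨0, by omega⟩⟩
  haveI : Nontrivial (EuclideanSpace ℝ (Fin n)) :=
    nontrivial_of_ne (EuclideanSpace.single ⟨0, by omega⟩ (1:ℝ)) 0 (by
      intro h
      have := congrArg norm h
      rw [EuclideanSpace.norm_single, norm_zero] at this
      norm_num at this)
  set v := volume (ball (0 : EuclideanSpace ℝ (Fin n)) 1) with hv
  have hvlt : v < ⊤ := measure_ball_lt_top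
  -- cover
  have hcover : ball (0 : EuclideanSpace ℝ (Fin n)) R \ {0} ⊆ ⋃ k, A k := by
    rintro x ⟨hxR, hx0⟩
    have hx0' : 0 < ‖x‖ := norm_pos_iff.2 hx0
    have hxRlt : ‖x‖ < R := mem_ball_zero_iff.1 hxR
    have hex : ∃ k, R * (2⁻¹ : ℝ) ^ k ≤ ‖x‖ := by
      obtain ⟨k, hk⟩ := exists_pow_lt_of_lt_one (div_pos hx0' hR) (by norm_num : (2⁻¹:ℝ) < 1)
      refine ⟨k, ?_⟩
      have h := mul_lt_mul_of_pos_left hk hR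
      have h2 : R * (‖x‖ / R) = ‖x‖ := by field_simp
      nlinarith
    let m := Nat.find hex
    have hm : R * (2⁻¹ : ℝ) ^ m ≤ ‖x‖ := Nat.find_spec hex
    have hmne : m ≠ 0 := by
      intro h
      rw [h, pow_zero, mul_one] at hm
      linarith
    obtain ⟨j, hj⟩ := Nat.exists_eq_succ_of_ne_zero hmne
    have hjlt : j < m := by omega
    have hjnot := Nat.find_min hex hjlt
    push_neg at hjnot
    refine mem_iUnion.2 ⟨j, ?_, ?_⟩
    · rw [mem_ball_zero_iff, hrdef]
      exact hjnot
    · rw [mem_ball_zero_iff, not_lt, hrdef]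
      rw [hj] at hm
      exact hm
  -- geometric bound on each annulus
  set Q : ℝ := (2⁻¹ : ℝ) ^ ((n : ℝ) - q) with hQ
  have hQ0 : 0 ≤ Q := Real.rpow_nonneg (by norm_num) _
  have hQ1 : Q < 1 := Real.rpow_lt_one (by norm_num) (by norm_num) (by linarith)
  set D : ℝ := C * (R * 2⁻¹) ^ (-q) * R ^ n with hD
  have hD0 : 0 ≤ D := by
    apply mul_nonneg (mul_nonneg hC _) _
    · exact Real.rpow_nonneg (by positivity) _
    · positivity
  have hterm : ∀ k, ∫⁻ x in A k, ENNReal.ofReal (C * ‖x‖ ^ (-q))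
      ≤ (ENNReal.ofReal D * v) * (ENNReal.ofReal Q) ^ k := by
    intro k
    have step1 : ∫⁻ x in A k, ENNReal.ofReal (C * ‖x‖ ^ (-q))
        ≤ ∫⁻ _ in A k, ENNReal.ofReal (C * (r (k+1)) ^ (-q)) := by
      refine setLIntegral_mono' (hAm k) fun x hx => ?_
      have hx2 : r (k + 1) ≤ ‖x‖ := by
        simpa [mem_ball_zero_iff, not_lt] using hx.2
      exact ENNReal.ofReal_le_ofReal
        (mul_le_mul_of_nonneg_left (rpow_anti (hrpos (k+1)) hx2 hq) hC)
    have step2 : (∫⁻ _ in A k, ENNReal.ofReal (C * (r (k+1)) ^ (-q)))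
        ≤ ENNReal.ofReal (C * (r (k+1)) ^ (-q)) * (ENNReal.ofReal ((r k) ^ n) * v) := by
      rw [setLIntegral_const]
      refine mul_le_mul_right ?_ _
      calc volume (A k) ≤ volume (ball (0 : EuclideanSpace ℝ (Fin n)) (r k)) :=
            measure_mono diff_subset
        _ = ENNReal.ofReal ((r k) ^ n) * v := by
            rw [Measure.addHaar_ball _ _ (hrpos k).le, finrank_euclideanSpace_fin]
    have hreal : C * (r (k+1)) ^ (-q) * ((r k) ^ n) = D * Q ^ k := by
      rw [hrdef, hrdef, hD, hQ]
      have h2 : (0:ℝ) < 2⁻¹ := by norm_num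
      have e1 : (R * 2⁻¹ ^ (k+1)) = (R * 2⁻¹) * 2⁻¹ ^ k := by rw [pow_succ]; ring
      rw [e1, Real.mul_rpow (by positivity) (by positivity)]
      have e2 : ((2⁻¹:ℝ) ^ k) ^ (-q) = ((2⁻¹:ℝ) ^ (-q)) ^ k := by
        rw [← Real.rpow_natCast (2⁻¹:ℝ) k, ← Real.rpow_mul h2.le, mul_comm,
          Real.rpow_mul h2.le, Real.rpow_natCast]
      have e3 : ((R : ℝ) * 2⁻¹ ^ k) ^ n = R ^ n * ((2⁻¹:ℝ) ^ n) ^ k := by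
        rw [mul_pow, ← pow_mul, ← pow_mul, Nat.mul_comm]
      have e4 : ((2⁻¹:ℝ) ^ ((n:ℝ) - q)) ^ k = (((2⁻¹:ℝ) ^ (n:ℕ)) * ((2⁻¹:ℝ) ^ (-q))) ^ k := by
        congr 1
        rw [sub_eq_add_neg, Real.rpow_add h2, Real.rpow_natCast]
      rw [e2, e3, e4, mul_pow]
      ring
    calc ∫⁻ x in A k, ENNReal.ofReal (C * ‖x‖ ^ (-q))
        ≤ ENNReal.ofReal (C * (r (k+1)) ^ (-q)) * (ENNReal.ofReal ((r k) ^ n) * v) :=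
          step1.trans step2
      _ = ENNReal.ofReal (C * (r (k+1)) ^ (-q) * ((r k) ^ n)) * v := by
          rw [← mul_assoc, ← ENNReal.ofReal_mul
            (mul_nonneg hC (Real.rpow_nonneg (hrpos _).le _))]
      _ = (ENNReal.ofReal D * v) * (ENNReal.ofReal Q) ^ k := by
          rw [hreal, ENNReal.ofReal_mul hD0, ← ENNReal.ofReal_pow hQ0]
          ring
  have hzero : ∫⁻ x in ball (0 : EuclideanSpace ℝ (Fin n)) R,
      ENNReal.ofReal (C * ‖x‖ ^ (-q))
      = ∫⁻ x in ball (0 : EuclideanSpace ℝ (Fin n)) R \ {0},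
        ENNReal.ofReal (C * ‖x‖ ^ (-q)) := by
    refine (setLIntegral_congr ?_).symm
    refine diff_ae_eq_self.2 (le_antisymm ?_ zero_le)
    calc volume (ball (0:EuclideanSpace ℝ (Fin n)) R ∩ {0})
        ≤ volume {(0:EuclideanSpace ℝ (Fin n))} := measure_mono inter_subset_right
      _ = 0 := measure_singleton _
  rw [hzero]
  calc ∫⁻ x in ball (0 : EuclideanSpace ℝ (Fin n)) R \ {0},
        ENNReal.ofReal (C * ‖x‖ ^ (-q))
      ≤ ∫⁻ x in ⋃ k, A k, ENNReal.ofReal (C * ‖x‖ ^ (-q)) := lintegral_mono_set hcover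
    _ = ∑' k, ∫⁻ x in A k, ENNReal.ofReal (C * ‖x‖ ^ (-q)) := lintegral_iUnion hAm hAd _
    _ ≤ ∑' k, (ENNReal.ofReal D * v) * (ENNReal.ofReal Q) ^ k := ENNReal.tsum_le_tsum hterm
    _ = (ENNReal.ofReal D * v) * ∑' k, (ENNReal.ofReal Q) ^ k := ENNReal.tsum_mul_left
    _ = (ENNReal.ofReal D * v) * (1 - ENNReal.ofReal Q)⁻¹ := by rw [ENNReal.tsum_geometric]
    _ < ⊤ := by
        refine ENNReal.mul_lt_top (ENNReal.mul_lt_top ENNReal.ofReal_lt_top hvlt) ?_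
        rw [ENNReal.inv_lt_top]
        exact tsub_pos_of_lt (ENNReal.ofReal_lt_one.2 hQ1)


variable {E : Type*} [NormedAddCommGroup E] [InnerProductSpace ℝ E]

private lemma u_hasFDerivAt (φ : ContDiffBump (0 : E)) {x : E} (hx : x ≠ 0) :
    HasFDerivAt (fun y : E => φ y * (‖y‖ ^ (2:ℝ)) ^ (-(1/4) : ℝ))
      ((φ x) • ((-(1/4) * (‖x‖ ^ (2:ℝ)) ^ (-(1/4) - 1 : ℝ)) •
          ((2 * ‖x‖ ^ ((2:ℝ) - 2)) • innerSL ℝ x))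
        + ((‖x‖ ^ (2:ℝ)) ^ (-(1/4):ℝ)) • fderiv ℝ (φ : E → ℝ) x) x := by
  have hq : HasFDerivAt (fun y : E => ‖y‖ ^ (2:ℝ))
      ((2 * ‖x‖ ^ ((2:ℝ) - 2)) • innerSL ℝ x) x := hasFDerivAt_norm_rpow x one_lt_two
  have hnx : (0:ℝ) < ‖x‖ := norm_pos_iff.2 hx
  have hf : HasDerivAt (fun t : ℝ => t ^ (-(1/4):ℝ))
      (-(1/4) * (‖x‖ ^ (2:ℝ)) ^ (-(1/4) - 1 : ℝ)) (‖x‖ ^ (2:ℝ)) :=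
    Real.hasDerivAt_rpow_const (Or.inl (by positivity))
  have hw := hf.comp_hasFDerivAt x hq
  have hφ : HasFDerivAt (φ : E → ℝ) (fderiv ℝ (φ : E → ℝ) x) x :=
    ((φ.contDiff (n := 1)).differentiable one_ne_zero x).hasFDerivAt
  exact hφ.mul hw

private lemma u_fderiv_bound (φ : ContDiffBump (0 : E)) {Cφ : ℝ}
    (hCφ : ∀ y, ‖fderiv ℝ (φ : E → ℝ) y‖ ≤ Cφ) {x : E} (hx : x ≠ 0) (hx1 : ‖x‖ ≤ 1) :
    ‖fderiv ℝ (fun y : E => φ y * (‖y‖ ^ (2:ℝ)) ^ (-(1/4) : ℝ)) x‖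
      ≤ (1/2 + Cφ) * ‖x‖ ^ (-(3/2) : ℝ) := by
  have hnx : (0:ℝ) < ‖x‖ := norm_pos_iff.2 hx
  rw [(u_hasFDerivAt φ hx).fderiv]
  have e1 : (‖x‖ ^ (2:ℝ)) ^ (-(1/4) - 1 : ℝ) = ‖x‖ ^ (-(5/2) : ℝ) := by
    rw [← Real.rpow_mul (norm_nonneg x)]; norm_num
  have e2 : (‖x‖ ^ (2:ℝ)) ^ (-(1/4) : ℝ) = ‖x‖ ^ (-(1/2) : ℝ) := by
    rw [← Real.rpow_mul (norm_nonneg x)]; norm_num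
  have e0 : ‖x‖ ^ ((2:ℝ) - 2) = 1 := by
    norm_num
  have hmulpow : ‖x‖ ^ (-(5/2):ℝ) * ‖x‖ = ‖x‖ ^ (-(3/2):ℝ) := by
    have h := (Real.rpow_add hnx (-(5/2)) 1).symm
    rw [Real.rpow_one] at h
    rw [h]; norm_num
  have hA : ‖(-(1/4) * (‖x‖ ^ (2:ℝ)) ^ (-(1/4) - 1 : ℝ)) •
      ((2 * ‖x‖ ^ ((2:ℝ) - 2)) • innerSL ℝ x)‖ = (1/2) * ‖x‖ ^ (-(3/2):ℝ) := by
    rw [norm_smul (-(1/4) * (‖x‖ ^ (2:ℝ)) ^ (-(1/4) - 1 : ℝ))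
        ((2 * ‖x‖ ^ ((2:ℝ) - 2)) • innerSL ℝ x),
      norm_smul (2 * ‖x‖ ^ ((2:ℝ) - 2)) (innerSL ℝ x),
      innerSL_apply_norm, e0, e1, mul_one]
    rw [Real.norm_eq_abs, Real.norm_eq_abs, abs_mul,
      abs_of_nonneg (Real.rpow_nonneg (norm_nonneg x) _),
      show |(-(1/4):ℝ)| = 1/4 by norm_num, show |(2:ℝ)| = 2 by norm_num, ← hmulpow]
    ring
  have hwx : (‖x‖ ^ (2:ℝ)) ^ (-(1/4):ℝ) ≤ ‖x‖ ^ (-(3/2):ℝ) := by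
    rw [e2]
    exact Real.rpow_le_rpow_of_exponent_ge hnx hx1 (by norm_num)
  have hw0 : (0:ℝ) ≤ (‖x‖ ^ (2:ℝ)) ^ (-(1/4):ℝ) :=
    Real.rpow_nonneg (Real.rpow_nonneg (norm_nonneg x) _) _
  have hX0 : (0:ℝ) ≤ ‖x‖ ^ (-(3/2):ℝ) := Real.rpow_nonneg (norm_nonneg x) _
  have hC0 : (0:ℝ) ≤ Cφ := le_trans (norm_nonneg _) (hCφ x)
  calc ‖(φ x) • ((-(1/4) * (‖x‖ ^ (2:ℝ)) ^ (-(1/4) - 1 : ℝ)) •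
          ((2 * ‖x‖ ^ ((2:ℝ) - 2)) • innerSL ℝ x))
        + ((‖x‖ ^ (2:ℝ)) ^ (-(1/4):ℝ)) • fderiv ℝ (φ : E → ℝ) x‖
      ≤ ‖(φ x) • ((-(1/4) * (‖x‖ ^ (2:ℝ)) ^ (-(1/4) - 1 : ℝ)) •
          ((2 * ‖x‖ ^ ((2:ℝ) - 2)) • innerSL ℝ x))‖
        + ‖((‖x‖ ^ (2:ℝ)) ^ (-(1/4):ℝ)) • fderiv ℝ (φ : E → ℝ) x‖ := norm_add_le _ _
    _ ≤ φ x * ((1/2) * ‖x‖ ^ (-(3/2):ℝ)) + (‖x‖ ^ (2:ℝ)) ^ (-(1/4):ℝ) * Cφ := by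
        rw [norm_smul (φ x) ((-(1/4) * (‖x‖ ^ (2:ℝ)) ^ (-(1/4) - 1 : ℝ)) •
            ((2 * ‖x‖ ^ ((2:ℝ) - 2)) • innerSL ℝ x)),
          norm_smul ((‖x‖ ^ (2:ℝ)) ^ (-(1/4):ℝ)) (fderiv ℝ (φ : E → ℝ) x),
          hA, Real.norm_eq_abs, Real.norm_eq_abs, abs_of_nonneg φ.nonneg, abs_of_nonneg hw0]
        exact add_le_add le_rfl (mul_le_mul_of_nonneg_left (hCφ x) hw0)
    _ ≤ 1 * ((1/2) * ‖x‖ ^ (-(3/2):ℝ)) + ‖x‖ ^ (-(3/2):ℝ) * Cφ := by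
        refine add_le_add (mul_le_mul_of_nonneg_right φ.le_one (by positivity)) ?_
        exact mul_le_mul_of_nonneg_right hwx hC0
    _ = (1/2 + Cφ) * ‖x‖ ^ (-(3/2) : ℝ) := by ring

end Aux


/-- **Theorem 1.2 (failure of the embedding, detailed form)**: on any open `Ω ⊇ B̄₂` in `ℝⁿ`,
`n ≥ 2`, there are a smooth variable exponent `p` satisfying (P) with `p̄(x) = p(x,x)` constant
and a function `u`, smooth away from the origin, with `u ∈ W^{1,p̄}(Ω)` but
`u ∉ W^{s,p(·,·)}(Ω)` for all `s ∈ (0,1)`. -/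
theorem sobolev_not_subset_fractional
    (n : ℕ) (hn : 2 ≤ n)
    (Ω : Set (EuclideanSpace ℝ (Fin n))) (hΩ : IsOpen Ω)
    (hB : closedBall (0 : EuclideanSpace ℝ (Fin n)) 2 ⊆ Ω) :
    ∃ p : EuclideanSpace ℝ (Fin n) → EuclideanSpace ℝ (Fin n) → ℝ,
      ContDiff ℝ (⊤ : ℕ∞) (Function.uncurry p) ∧
      (∃ pm pp : ℝ, 1 < pm ∧ ∀ x ∈ Ω, ∀ y ∈ Ω, pm ≤ p x y ∧ p x y ≤ pp) ∧
      (∃ c : ℝ, ∀ x ∈ Ω, p x x = c) ∧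
      ∃ u : EuclideanSpace ℝ (Fin n) → ℝ,
        ContDiffOn ℝ (⊤ : ℕ∞) u (Ω \ {0}) ∧
        (∫⁻ x in Ω, ENNReal.ofReal (|u x| ^ p x x)) < ⊤ ∧
        (∫⁻ x in Ω \ {0}, ENNReal.ofReal (‖gradient u x‖ ^ p x x)) < ⊤ ∧
        ∀ s ∈ Set.Ioo (0 : ℝ) 1, ∀ lam : ℝ, 0 < lam →
          varModular n Ω p s (fun x => u x / lam) = ⊤ := by
  classical
  have hn2 : (2:ℝ) ≤ (n:ℝ) := by exact_mod_cast hn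
  set δ : ℝ := 2 * (n:ℝ) - 6/5 with hδ
  have hδ0 : 0 < δ := by rw [hδ]; linarith
  let φ : ContDiffBump (0 : EuclideanSpace ℝ (Fin n)) := ⟨1/4, 1/2, by norm_num, by norm_num⟩
  let a : EuclideanSpace ℝ (Fin n) := EuclideanSpace.single (⟨0, by omega⟩ : Fin n) (3/2 : ℝ)
  have ha : ‖a‖ = 3/2 := by
    rw [EuclideanSpace.norm_single]
    norm_num
  let χ : ContDiffBump a := ⟨1/4, 1/2, by norm_num, by norm_num⟩
  have hsep : ∀ x : EuclideanSpace ℝ (Fin n), (φ x : ℝ) * χ x = 0 := by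
    intro x
    rcases le_or_gt (1/2 : ℝ) ‖x‖ with h | h
    · rw [φ.zero_of_le_dist (by rwa [dist_zero_right]), zero_mul]
    · rw [χ.zero_of_le_dist ?_, mul_zero]
      have h2 := norm_sub_norm_le a x
      rw [norm_sub_rev] at h2
      rw [dist_eq_norm]
      show (1/2 : ℝ) ≤ ‖x - a‖
      rw [ha] at h2
      linarith
  refine ⟨fun x y => 6/5 + δ * (φ x * χ y), ?_, ?_, ?_, ?_⟩
  · show ContDiff ℝ _ fun q : EuclideanSpace ℝ (Fin n) × EuclideanSpace ℝ (Fin n) =>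
      (6/5 : ℝ) + δ * (φ q.1 * χ q.2)
    exact contDiff_const.add
      (contDiff_const.mul ((φ.contDiff.comp contDiff_fst).mul (χ.contDiff.comp contDiff_snd)))
  · refine ⟨6/5, 6/5 + δ, by norm_num, fun x _ y _ => ⟨?_, ?_⟩⟩
    · nlinarith [φ.nonneg' x, χ.nonneg' y, mul_nonneg (φ.nonneg' x) (χ.nonneg' y)]
    · nlinarith [φ.nonneg' x, χ.nonneg' y, (φ.le_one (x := x)), (χ.le_one (x := y)),
        mul_le_one₀ (φ.le_one (x := x)) (χ.nonneg' y) (χ.le_one (x := y))]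
  · refine ⟨6/5, fun x _ => ?_⟩
    show (6/5 + δ * (φ x * χ x) : ℝ) = 6/5
    rw [hsep x, mul_zero, add_zero]
  set u : EuclideanSpace ℝ (Fin n) → ℝ :=
    fun y => φ y * (‖y‖ ^ (2:ℝ)) ^ (-(1/4) : ℝ) with hu
  have hw_eq : ∀ y : EuclideanSpace ℝ (Fin n),
      (‖y‖ ^ (2:ℝ)) ^ (-(1/4):ℝ) = ‖y‖ ^ (-(1/2):ℝ) := fun y => by
    rw [← Real.rpow_mul (norm_nonneg y)]; norm_num
  have hw0 : ∀ y : EuclideanSpace ℝ (Fin n), 0 ≤ (‖y‖ ^ (2:ℝ)) ^ (-(1/4):ℝ) :=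
    fun y => Real.rpow_nonneg (Real.rpow_nonneg (norm_nonneg y) _) _
  have hu0 : ∀ y, 0 ≤ u y := fun y => mul_nonneg φ.nonneg (hw0 y)
  have hu_le : ∀ y, u y ≤ ‖y‖ ^ (-(1/2):ℝ) := by
    intro y
    rw [hu]
    calc (φ y : ℝ) * (‖y‖ ^ (2:ℝ)) ^ (-(1/4):ℝ)
        ≤ 1 * (‖y‖ ^ (2:ℝ)) ^ (-(1/4):ℝ) :=
          mul_le_mul_of_nonneg_right φ.le_one (hw0 y)
      _ = ‖y‖ ^ (-(1/2):ℝ) := by rw [one_mul, hw_eq]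
  have hu_zero : ∀ y : EuclideanSpace ℝ (Fin n), (1/2:ℝ) ≤ ‖y‖ → u y = 0 := by
    intro y hy
    show (φ y : ℝ) * (‖y‖ ^ (2:ℝ)) ^ (-(1/4):ℝ) = 0
    rw [φ.zero_of_le_dist (by rwa [dist_zero_right]), zero_mul]
  have hu_ball : ∀ x ∈ ball (0 : EuclideanSpace ℝ (Fin n)) (1/4),
      u x = ‖x‖ ^ (-(1/2):ℝ) := by
    intro x hx
    show (φ x : ℝ) * (‖x‖ ^ (2:ℝ)) ^ (-(1/4):ℝ) = ‖x‖ ^ (-(1/2):ℝ)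
    rw [φ.one_of_mem_closedBall (ball_subset_closedBall hx), one_mul, hw_eq]
  have hpd : ∀ x : EuclideanSpace ℝ (Fin n), (6/5 + δ * (φ x * χ x) : ℝ) = 6/5 := by
    intro x
    rw [hsep x, mul_zero, add_zero]
  refine ⟨u, ?_, ?_, ?_, ?_⟩
  -- (a) smoothness
  · intro x hx
    have hx0 : x ≠ 0 := fun h => hx.2 (by simp [h])
    have hnx : ‖x‖ ≠ 0 := norm_ne_zero_iff.2 hx0
    have h1 : ContDiffAt ℝ (⊤ : ℕ∞) (fun y : EuclideanSpace ℝ (Fin n) => ‖y‖) x :=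
      contDiffAt_id.norm ℝ hx0
    have h2 : ContDiffAt ℝ (⊤ : ℕ∞) (fun y : EuclideanSpace ℝ (Fin n) => ‖y‖ ^ (2:ℝ)) x :=
      h1.rpow_const_of_ne hnx
    have h3 : ContDiffAt ℝ (⊤ : ℕ∞)
        (fun y : EuclideanSpace ℝ (Fin n) => (‖y‖ ^ (2:ℝ)) ^ (-(1/4):ℝ)) x :=
      h2.rpow_const_of_ne (by positivity)
    exact (φ.contDiffAt.mul h3).contDiffWithinAt
  -- (b) u ∈ L^{6/5}
  · simp only [hpd]
    have hb : ∀ x ∈ ball (0 : EuclideanSpace ℝ (Fin n)) 1,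
        ENNReal.ofReal (|u x| ^ (6/5 : ℝ)) ≤ ENNReal.ofReal (1 * ‖x‖ ^ (-(3/5) : ℝ)) := by
      intro x _
      refine ENNReal.ofReal_le_ofReal ?_
      rw [one_mul, abs_of_nonneg (hu0 x)]
      calc u x ^ (6/5:ℝ) ≤ (‖x‖ ^ (-(1/2):ℝ)) ^ (6/5:ℝ) :=
            Real.rpow_le_rpow (hu0 x) (hu_le x) (by norm_num)
        _ = ‖x‖ ^ (-(3/5):ℝ) := by
            rw [← Real.rpow_mul (norm_nonneg x)]; norm_num
    calc ∫⁻ x in Ω, ENNReal.ofReal (|u x| ^ (6/5:ℝ))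
        ≤ ∫⁻ x, ENNReal.ofReal (|u x| ^ (6/5:ℝ)) := setLIntegral_le_lintegral _ _
      _ = (∫⁻ x in ball (0 : EuclideanSpace ℝ (Fin n)) 1, ENNReal.ofReal (|u x| ^ (6/5:ℝ)))
          + ∫⁻ x in (ball (0 : EuclideanSpace ℝ (Fin n)) 1)ᶜ,
              ENNReal.ofReal (|u x| ^ (6/5:ℝ)) := (lintegral_add_compl _ measurableSet_ball).symm
      _ ≤ (∫⁻ x in ball (0 : EuclideanSpace ℝ (Fin n)) 1,
              ENNReal.ofReal (1 * ‖x‖ ^ (-(3/5) : ℝ))) + 0 := by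
          refine add_le_add (setLIntegral_mono' measurableSet_ball hb) (le_of_eq ?_)
          rw [setLIntegral_congr_fun measurableSet_ball.compl
            (fun x hx => ?_), lintegral_zero]
          have h1 : (1:ℝ) ≤ ‖x‖ := by
            simpa [mem_ball_zero_iff, not_lt] using hx
          rw [hu_zero x (by linarith), abs_zero, Real.zero_rpow (by norm_num),
            ENNReal.ofReal_zero]
      _ < ⊤ := by
          rw [add_zero]
          exact fin_lemma n one_pos zero_le_one (by norm_num) (by push_cast; linarith)
  -- (c) gradient
  · simp only [hpd]
    obtain ⟨Cφ, hCφ⟩ : ∃ C : ℝ, ∀ y, ‖fderiv ℝ (φ : EuclideanSpace ℝ (Fin n) → ℝ) y‖ ≤ C := by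
      exact ((φ.contDiff (n := 1)).continuous_fderiv one_ne_zero).bounded_above_of_compact_support
        (HasCompactSupport.fderiv (𝕜 := ℝ) φ.hasCompactSupport)
    have hCφ0 : (0:ℝ) ≤ Cφ := le_trans (norm_nonneg _) (hCφ 0)
    set M : ℝ := (1/2 + Cφ) ^ ((6/5 : ℝ)) with hM
    have hM0 : 0 ≤ M := Real.rpow_nonneg (by linarith) _
    have hgradnorm : ∀ x, ‖gradient u x‖ = ‖fderiv ℝ u x‖ := fun x => by
      unfold gradient
      exact LinearIsometryEquiv.norm_map _ _
    have hgrad0 : ∀ x : EuclideanSpace ℝ (Fin n), 1 ≤ ‖x‖ → gradient u x = 0 := by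
      intro x hx
      have hopen : IsOpen {y : EuclideanSpace ℝ (Fin n) | (1/2:ℝ) < ‖y‖} :=
        isOpen_lt continuous_const continuous_norm
      have hmem : x ∈ {y : EuclideanSpace ℝ (Fin n) | (1/2:ℝ) < ‖y‖} := by
        simp only [mem_setOf_eq]; linarith
      have heq : u =ᶠ[𝓝 x] (fun _ => (0:ℝ)) :=
        Filter.eventuallyEq_of_mem (hopen.mem_nhds hmem)
          (fun y hy => hu_zero y (le_of_lt hy))
      rw [heq.gradient_eq]
      unfold gradient
      rw [fderiv_fun_const]
      simp
    have hbd : ∀ x ∈ ball (0 : EuclideanSpace ℝ (Fin n)) 1 \ {0},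
        ENNReal.ofReal (‖gradient u x‖ ^ (6/5:ℝ))
          ≤ ENNReal.ofReal (M * ‖x‖ ^ (-(9/5) : ℝ)) := by
      intro x hx
      have hx0 : x ≠ 0 := fun h => hx.2 (by simp [h])
      have hx1 : ‖x‖ ≤ 1 := (mem_ball_zero_iff.1 hx.1).le
      refine ENNReal.ofReal_le_ofReal ?_
      have h1 : ‖fderiv ℝ u x‖ ≤ (1/2 + Cφ) * ‖x‖ ^ (-(3/2) : ℝ) := by
        rw [hu]
        exact u_fderiv_bound φ hCφ hx0 hx1
      calc ‖gradient u x‖ ^ (6/5:ℝ)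
          ≤ ((1/2 + Cφ) * ‖x‖ ^ (-(3/2) : ℝ)) ^ (6/5:ℝ) := by
            rw [hgradnorm]
            exact Real.rpow_le_rpow (norm_nonneg _) h1 (by norm_num)
        _ = M * ‖x‖ ^ (-(9/5) : ℝ) := by
            rw [Real.mul_rpow (by linarith) (Real.rpow_nonneg (norm_nonneg x) _), hM,
              ← Real.rpow_mul (norm_nonneg x)]
            norm_num
    have hsubset : Ω \ {0} ⊆ (ball (0 : EuclideanSpace ℝ (Fin n)) 1 \ {0})
        ∪ (ball (0 : EuclideanSpace ℝ (Fin n)) 1)ᶜ := by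
      intro x hx
      by_cases h : x ∈ ball (0 : EuclideanSpace ℝ (Fin n)) 1
      · exact Or.inl ⟨h, hx.2⟩
      · exact Or.inr h
    calc ∫⁻ x in Ω \ {0}, ENNReal.ofReal (‖gradient u x‖ ^ (6/5:ℝ))
        ≤ ∫⁻ x in (ball (0 : EuclideanSpace ℝ (Fin n)) 1 \ {0})
            ∪ (ball (0 : EuclideanSpace ℝ (Fin n)) 1)ᶜ,
            ENNReal.ofReal (‖gradient u x‖ ^ (6/5:ℝ)) := lintegral_mono_set hsubset
      _ ≤ (∫⁻ x in ball (0 : EuclideanSpace ℝ (Fin n)) 1 \ {0},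
            ENNReal.ofReal (‖gradient u x‖ ^ (6/5:ℝ)))
          + ∫⁻ x in (ball (0 : EuclideanSpace ℝ (Fin n)) 1)ᶜ,
            ENNReal.ofReal (‖gradient u x‖ ^ (6/5:ℝ)) := lintegral_union_le _ _ _
      _ ≤ (∫⁻ x in ball (0 : EuclideanSpace ℝ (Fin n)) 1 \ {0},
            ENNReal.ofReal (M * ‖x‖ ^ (-(9/5) : ℝ))) + 0 := by
          refine add_le_add
            (setLIntegral_mono' (measurableSet_ball.diff (measurableSet_singleton _)) hbd)
            (le_of_eq ?_)
          rw [setLIntegral_congr_fun measurableSet_ball.compl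
            (fun x hx => ?_), lintegral_zero]
          have h1 : (1:ℝ) ≤ ‖x‖ := by
            simpa [mem_ball_zero_iff, not_lt] using hx
          rw [hgrad0 x h1, norm_zero, Real.zero_rpow (by norm_num), ENNReal.ofReal_zero]
      _ ≤ (∫⁻ x in ball (0 : EuclideanSpace ℝ (Fin n)) 1,
            ENNReal.ofReal (M * ‖x‖ ^ (-(9/5) : ℝ))) + 0 :=
          add_le_add (lintegral_mono_set diff_subset) le_rfl
      _ < ⊤ := by
          rw [add_zero]
          exact fin_lemma n one_pos hM0 (by norm_num) (by push_cast; linarith)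
  -- (d) divergence
  · intro s hs lam hlam
    simp only [varModular]
    refine ENNReal.mul_eq_top.2 (Or.inl ⟨?_, ?_⟩)
    · exact (ENNReal.ofReal_pos.2 (mul_pos hs.1 (by linarith [hs.2]))).ne'
    set Cl : ℝ := (lam ^ (2*(n:ℝ)) * (2:ℝ) ^ (3*(n:ℝ)))⁻¹ with hCl
    have hCl0 : 0 < Cl := by
      rw [hCl]
      exact inv_pos.2 (mul_pos (Real.rpow_pos_of_pos hlam _) (Real.rpow_pos_of_pos two_pos _))
    have hball0Ω : ball (0 : EuclideanSpace ℝ (Fin n)) (1/4) ⊆ Ω := by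
      intro z hz
      refine hB ?_
      rw [mem_closedBall, dist_zero_right]
      have := mem_ball_zero_iff.1 hz
      linarith
    have hballaΩ : ball a (1/4) ⊆ Ω := by
      intro z hz
      refine hB ?_
      rw [mem_closedBall, dist_zero_right]
      rw [mem_ball, dist_eq_norm] at hz
      have h2 : ‖z‖ ≤ ‖z - a‖ + ‖a‖ := by
        calc ‖z‖ = ‖(z - a) + a‖ := by rw [sub_add_cancel]
          _ ≤ ‖z - a‖ + ‖a‖ := norm_add_le _ _
      rw [ha] at h2
      linarith
    set V := volume (ball a (1/4)) with hV
    have hVne : V ≠ 0 := (measure_ball_pos volume a (by norm_num)).ne'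
    have hVlt : V ≠ ⊤ := measure_ball_lt_top.ne
    have hpoint : ∀ x ∈ ball (0 : EuclideanSpace ℝ (Fin n)) (1/4), ∀ y ∈ ball a (1/4),
        ENNReal.ofReal (Cl * ‖x‖ ^ (-(n:ℝ))) ≤
        ENNReal.ofReal (|u x / lam - u y / lam| ^ (6/5 + δ * (φ x * χ y)) /
          ‖x - y‖ ^ ((n:ℝ) + s * (6/5 + δ * (φ x * χ y)))) := by
      intro x hx y hy
      by_cases hx0 : x = 0
      · subst hx0
        rw [norm_zero, Real.zero_rpow (neg_ne_zero.2 (Nat.cast_ne_zero.2 (by omega))), mul_zero,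
          ENNReal.ofReal_zero]
        exact zero_le
      have hφx : (φ x : ℝ) = 1 := φ.one_of_mem_closedBall (ball_subset_closedBall hx)
      have hχy : (χ y : ℝ) = 1 := χ.one_of_mem_closedBall (ball_subset_closedBall hy)
      have hya : ‖y - a‖ < 1/4 := by rwa [mem_ball, dist_eq_norm] at hy
      have hxn : ‖x‖ < 1/4 := mem_ball_zero_iff.1 hx
      have hxpos : 0 < ‖x‖ := norm_pos_iff.2 hx0
      have hynorm : (5/4:ℝ) ≤ ‖y‖ := by
        have h := norm_sub_norm_le a y
        rw [norm_sub_rev, ha] at h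
        linarith
      have huy : u y = 0 := hu_zero y (by linarith)
      have hux : u x = ‖x‖ ^ (-(1/2):ℝ) := hu_ball x hx
      have hxy1 : (1:ℝ) ≤ ‖x - y‖ := by
        have h := norm_sub_norm_le y x
        rw [norm_sub_rev] at h
        linarith
      have hxy2 : ‖x - y‖ ≤ 2 := by
        have h := norm_sub_le x y
        have h2 : ‖y‖ ≤ ‖y - a‖ + ‖a‖ := by
          calc ‖y‖ = ‖(y - a) + a‖ := by rw [sub_add_cancel]
            _ ≤ ‖y - a‖ + ‖a‖ := norm_add_le _ _
        rw [ha] at h2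
        linarith
      have hP : (6/5 + δ * (φ x * χ y) : ℝ) = 2*(n:ℝ) := by
        rw [hφx, hχy, hδ]; ring
      rw [hP, huy, hux]
      have he0 : (0:ℝ) ≤ (n:ℝ) + s * (2*(n:ℝ)) := by
        have := hs.1.le
        positivity
      have heub : (n:ℝ) + s * (2*(n:ℝ)) ≤ 3*(n:ℝ) := by
        nlinarith [hs.2.le, hs.1.le]
      have hDpos : (0:ℝ) < ‖x - y‖ ^ ((n:ℝ) + s * (2*(n:ℝ))) :=
        Real.rpow_pos_of_pos (by linarith) _
      have hDle : ‖x - y‖ ^ ((n:ℝ) + s * (2*(n:ℝ))) ≤ (2:ℝ) ^ (3*(n:ℝ)) :=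
        (Real.rpow_le_rpow (by linarith) hxy2 he0).trans
          (Real.rpow_le_rpow_of_exponent_le one_le_two heub)
      refine ENNReal.ofReal_le_ofReal ?_
      have habs : |‖x‖ ^ (-(1/2):ℝ) / lam - 0 / lam| = ‖x‖ ^ (-(1/2):ℝ) / lam := by
        rw [zero_div, sub_zero]
        exact abs_of_nonneg (div_nonneg (Real.rpow_nonneg (norm_nonneg x) _) hlam.le)
      rw [habs]
      have hnum : (‖x‖ ^ (-(1/2):ℝ) / lam) ^ (2*(n:ℝ))
          = ‖x‖ ^ (-(n:ℝ)) / lam ^ (2*(n:ℝ)) := by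
        rw [Real.div_rpow (Real.rpow_nonneg (norm_nonneg x) _) hlam.le]
        congr 1
        rw [← Real.rpow_mul (norm_nonneg x)]
        congr 1
        ring
      rw [hnum, div_div]
      rw [hCl, mul_comm, ← div_eq_mul_inv]
      exact div_le_div_of_nonneg_left (Real.rpow_nonneg (norm_nonneg x) _)
        (mul_pos (Real.rpow_pos_of_pos hlam _) hDpos)
        (mul_le_mul_of_nonneg_left hDle (Real.rpow_pos_of_pos hlam _).le)
    have hinner : ∀ x ∈ ball (0 : EuclideanSpace ℝ (Fin n)) (1/4),
        ENNReal.ofReal (Cl * ‖x‖ ^ (-(n:ℝ))) * V ≤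
        ∫⁻ y in Ω, ENNReal.ofReal (|u x / lam - u y / lam| ^ (6/5 + δ * (φ x * χ y)) /
          ‖x - y‖ ^ ((n:ℝ) + s * (6/5 + δ * (φ x * χ y)))) := by
      intro x hx
      calc ENNReal.ofReal (Cl * ‖x‖ ^ (-(n:ℝ))) * V
          = ∫⁻ _ in ball a (1/4), ENNReal.ofReal (Cl * ‖x‖ ^ (-(n:ℝ))) :=
            (setLIntegral_const _ _).symm
        _ ≤ ∫⁻ y in ball a (1/4),
              ENNReal.ofReal (|u x / lam - u y / lam| ^ (6/5 + δ * (φ x * χ y)) /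
                ‖x - y‖ ^ ((n:ℝ) + s * (6/5 + δ * (φ x * χ y)))) :=
            setLIntegral_mono' measurableSet_ball (fun y hy => hpoint x hx y hy)
        _ ≤ _ := lintegral_mono_set hballaΩ
    refine top_le_iff.1 ?_
    calc (⊤:ℝ≥0∞)
        = (∫⁻ x in ball (0 : EuclideanSpace ℝ (Fin n)) (1/4),
            ENNReal.ofReal (Cl * ‖x‖ ^ (-(n:ℝ)))) * V := by
          rw [div_lemma n (by omega) (by norm_num) hCl0, ENNReal.top_mul hVne]
      _ = ∫⁻ x in ball (0 : EuclideanSpace ℝ (Fin n)) (1/4),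
            ENNReal.ofReal (Cl * ‖x‖ ^ (-(n:ℝ))) * V :=
          (lintegral_mul_const' V _ hVlt).symm
      _ ≤ ∫⁻ x in ball (0 : EuclideanSpace ℝ (Fin n)) (1/4),
            ∫⁻ y in Ω, ENNReal.ofReal (|u x / lam - u y / lam| ^ (6/5 + δ * (φ x * χ y)) /
              ‖x - y‖ ^ ((n:ℝ) + s * (6/5 + δ * (φ x * χ y)))) :=
          setLIntegral_mono' measurableSet_ball hinner
      _ ≤ _ := lintegral_mono_set hball0Ω
end

section
/- There exist an integer n ≥ 2, an open set Ω ⊆ ℝⁿ, a smooth function p : Ω × Ω → ℝ satisfying (P), and a function u : Ω → ℝ, smooth on Ω \ {0}, with ∫_Ω |u(x)|^{p̄(x)} dx < ∞ and ∫_{Ω\{0}} |∇u(x)|^{p̄(x)} dx < ∞ (so u ∈ W^{1,p̄(·)}(Ω)), for which the equality lim_{s↗1} s(1−s) ∫_Ω ∫_Ω |u(x)−u(y)|^{p(x,y)} / |x−y|^{n+s·p(x,y)} dy dx = ∫_Ω K_{n,p̄(x)} |∇u(x)|^{p̄(x)} dx fails: the right-hand side is finite while the left-hand side equals +∞ for every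 s ∈ (0,1). -/
open MeasureTheory Filter Metric Set
open scoped ENNReal Topology

namespace BBMAux


noncomputable abbrev E2 := EuclideanSpace ℝ (Fin 2)

lemma volE2_ball (c : E2) {r : ℝ} (hr : 0 ≤ r) :
    volume (ball c r) = ENNReal.ofReal (r ^ 2) * volume (ball (0 : E2) 1) := by
  simpa using Measure.addHaar_ball (volume : Measure E2) c hr

lemma half_pow_rpow (n : ℕ) (r : ℝ) :
    (((1:ℝ)/2) ^ n) ^ (-r) = ((2:ℝ) ^ r) ^ n := by
  rw [← Real.rpow_natCast ((1:ℝ)/2) n, ← Real.rpow_mul (by norm_num),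
    ← Real.rpow_natCast ((2:ℝ) ^ r) n, ← Real.rpow_mul (by norm_num),
    one_div, Real.inv_rpow (by norm_num), ← Real.rpow_neg (by norm_num)]
  congr 1
  ring

lemma lintegral_radial_lt_top {r : ℝ} (hr0 : 0 ≤ r) (hr : r < 2) :
    ∫⁻ x in ball (0 : E2) 1, ENNReal.ofReal (‖x‖ ^ (-r)) < ⊤ := by
  set B := volume (ball (0 : E2) 1) with hBdef
  have hBlt : B < ⊤ := measure_ball_lt_top
  set q : ℝ := (2:ℝ) ^ r with hq
  have hq0 : 0 < q := Real.rpow_pos_of_pos (by norm_num) r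
  have hq4 : q < 4 := by
    have h1 : (2:ℝ) ^ r < 2 ^ (2:ℝ) := Real.rpow_lt_rpow_of_exponent_lt one_lt_two hr
    have h2 : (2:ℝ) ^ (2:ℝ) = 4 := by
      rw [show (2:ℝ) = ((2:ℕ):ℝ) from by norm_num, Real.rpow_natCast]
      norm_num
    linarith
  set ρ : ℝ≥0∞ := ENNReal.ofReal q * ENNReal.ofReal (1/4) with hρ
  have hρ1 : ρ < 1 := by
    rw [hρ, ← ENNReal.ofReal_mul hq0.le, ← ENNReal.ofReal_one]
    exact (ENNReal.ofReal_lt_ofReal_iff_of_nonneg (by positivity)).2 (by linarith)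
  set S : ℕ → Set E2 := fun k => ball (0:E2) (((1:ℝ)/2) ^ k) \ ball 0 (((1:ℝ)/2) ^ (k+1)) with hS
  have hcover : ball (0:E2) 1 \ {0} ⊆ ⋃ k, S k := by
    intro x hx
    have hx0 : 0 < ‖x‖ := norm_pos_iff.2 hx.2
    have hx1 : ‖x‖ < 1 := mem_ball_zero_iff.1 hx.1
    have hP : ∃ n : ℕ, ((1:ℝ)/2) ^ n ≤ ‖x‖ := by
      obtain ⟨n, hn⟩ := exists_pow_lt_of_lt_one hx0 (by norm_num : (1:ℝ)/2 < 1)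
      exact ⟨n, hn.le⟩
    have hk := Nat.find_spec hP
    have hk0 : Nat.find hP ≠ 0 := by
      intro h
      rw [h] at hk
      simp at hk
      linarith
    obtain ⟨m, hm⟩ := Nat.exists_eq_succ_of_ne_zero hk0
    have hlt : ¬ (((1:ℝ)/2) ^ m ≤ ‖x‖) := Nat.find_min hP (by omega)
    have hk' : ((1:ℝ)/2) ^ (m+1) ≤ ‖x‖ := by
      rw [← Nat.succ_eq_add_one, ← hm]; exact hk
    refine mem_iUnion.2 ⟨m, ?_⟩
    constructor
    · exact mem_ball_zero_iff.2 (by push_neg at hlt; exact hlt)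
    · intro hmem
      have := mem_ball_zero_iff.1 hmem
      linarith
  have hnull : volume ({(0:E2)}) = 0 := measure_singleton _
  have hs0 : ∫⁻ x in ball (0:E2) 1, ENNReal.ofReal (‖x‖ ^ (-r))
      = ∫⁻ x in ball (0:E2) 1 \ {0}, ENNReal.ofReal (‖x‖ ^ (-r)) := by
    refine (setLIntegral_congr ?_).symm
    refine diff_ae_eq_self.2 (measure_mono_null ?_ hnull)
    first
      | exact inter_subset_left
      | exact inter_subset_right
  rw [hs0]
  have hshell : ∀ k : ℕ, ∫⁻ x in S k, ENNReal.ofReal (‖x‖ ^ (-r))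
      ≤ ENNReal.ofReal q * B * ρ ^ k := by
    intro k
    have hmeas : MeasurableSet (S k) := measurableSet_ball.diff measurableSet_ball
    have hbound : ∀ x ∈ S k, ENNReal.ofReal (‖x‖ ^ (-r)) ≤ ENNReal.ofReal (q ^ (k+1)) := by
      intro x hxk
      have hge : ((1:ℝ)/2) ^ (k+1) ≤ ‖x‖ := by
        by_contra h
        exact hxk.2 (mem_ball_zero_iff.2 (by push_neg at h; exact h))
      have h0 : (0:ℝ) < ((1:ℝ)/2) ^ (k+1) := by positivity
      have := Real.rpow_le_rpow_of_nonpos h0 hge (neg_nonpos.2 hr0)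
      rw [half_pow_rpow (k+1) r] at this
      exact ENNReal.ofReal_le_ofReal this
    have hhalfsq : ((((1:ℝ)/2) ^ k) ^ 2) = ((1:ℝ)/4) ^ k := by
      rw [← pow_mul, show ((1:ℝ)/4) = ((1:ℝ)/2)^2 from by norm_num, ← pow_mul, mul_comm]
    calc ∫⁻ x in S k, ENNReal.ofReal (‖x‖ ^ (-r))
        ≤ ∫⁻ _ in S k, ENNReal.ofReal (q ^ (k+1)) := setLIntegral_mono' hmeas hbound
      _ = ENNReal.ofReal (q ^ (k+1)) * volume (S k) := setLIntegral_const _ _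
      _ ≤ ENNReal.ofReal (q ^ (k+1)) * volume (ball (0:E2) (((1:ℝ)/2) ^ k)) := by
          gcongr
          exact diff_subset
      _ = ENNReal.ofReal (q ^ (k+1)) * (ENNReal.ofReal ((((1:ℝ)/2) ^ k) ^ 2) * B) := by
          rw [volE2_ball _ (by positivity)]
      _ = ENNReal.ofReal q * B * ρ ^ k := by
          rw [hρ, hhalfsq, pow_succ, mul_pow,
            ← ENNReal.ofReal_pow hq0.le, ← ENNReal.ofReal_pow (by norm_num : (0:ℝ) ≤ 1/4),
            ← ENNReal.ofReal_mul (by positivity)]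
          rw [ENNReal.ofReal_mul (pow_nonneg hq0.le k), ENNReal.ofReal_mul (pow_nonneg hq0.le k)]
          ring
  calc ∫⁻ x in ball (0:E2) 1 \ {0}, ENNReal.ofReal (‖x‖ ^ (-r))
      ≤ ∫⁻ x in ⋃ k, S k, ENNReal.ofReal (‖x‖ ^ (-r)) := lintegral_mono_set hcover
    _ ≤ ∑' k, ∫⁻ x in S k, ENNReal.ofReal (‖x‖ ^ (-r)) := lintegral_iUnion_le _ _
    _ ≤ ∑' k : ℕ, ENNReal.ofReal q * B * ρ ^ k := ENNReal.tsum_le_tsum hshell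
    _ = ENNReal.ofReal q * B * ∑' k : ℕ, ρ ^ k := ENNReal.tsum_mul_left
    _ < ⊤ := by
        rw [ENNReal.tsum_geometric]
        refine ENNReal.mul_lt_top (ENNReal.mul_lt_top ENNReal.ofReal_lt_top hBlt) ?_
        exact ENNReal.inv_lt_top.2 (tsub_pos_of_lt hρ1)




lemma volE2_ball' (c : E2) {r : ℝ} (hr : 0 ≤ r) :
    volume (ball c r) = ENNReal.ofReal (r ^ 2) * volume (ball (0 : E2) 1) := by
  simpa using Measure.addHaar_ball (volume : Measure E2) c hr

lemma lintegral_radial_eq_top :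
    ∫⁻ y in ball (0 : E2) (1/100) \ {0}, ENNReal.ofReal (‖y‖ ^ (-2 : ℝ)) = ⊤ := by
  set B := volume (ball (0 : E2) 1) with hBdef
  have hBlt : B < ⊤ := measure_ball_lt_top
  have hB0 : B ≠ 0 := (measure_ball_pos _ _ (by norm_num)).ne'
  set R : ℕ → ℝ := fun k => (1/100) * ((1:ℝ)/2) ^ k with hR
  have hRpos : ∀ k, 0 < R k := fun k => by positivity
  have hRsucc : ∀ k, R (k+1) = R k / 2 := fun k => by
    simp only [hR, pow_succ]; ring
  set T : ℕ → Set E2 := fun k => ball (0:E2) (R k) \ ball 0 (R (k+1)) with hT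
  have hTmeas : ∀ k, MeasurableSet (T k) := fun k =>
    measurableSet_ball.diff measurableSet_ball
  have hRanti : ∀ {i j : ℕ}, i ≤ j → R j ≤ R i := by
    intro i j hij
    have := pow_le_pow_of_le_one (by norm_num : (0:ℝ) ≤ 1/2) (by norm_num) hij
    simp only [hR]
    nlinarith
  have hTdisj : Pairwise (Function.onFun Disjoint T) := by
    intro i j hij
    wlog h : i < j generalizing i j
    · exact (this hij.symm (by omega)).symm
    refine Set.disjoint_left.2 fun y hyi hyj => ?_
    have h1 : ¬ ‖y‖ < R (i+1) := fun hc => hyi.2 (mem_ball_zero_iff.2 hc)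
    have h2 : ‖y‖ < R j := mem_ball_zero_iff.1 hyj.1
    have h3 : R j ≤ R (i+1) := hRanti (by omega)
    push_neg at h1
    linarith
  have hTsub : (⋃ k, T k) ⊆ ball (0 : E2) (1/100) \ {0} := by
    intro y hy
    obtain ⟨k, hk⟩ := mem_iUnion.1 hy
    have h1 : ‖y‖ < R k := mem_ball_zero_iff.1 hk.1
    have h2 : ¬ ‖y‖ < R (k+1) := fun hc => hk.2 (mem_ball_zero_iff.2 hc)
    push_neg at h2
    constructor
    · refine mem_ball_zero_iff.2 (lt_of_lt_of_le h1 ?_)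
      have := hRanti (Nat.zero_le k)
      simpa [hR] using this
    · simp only [mem_singleton_iff]
      intro h
      rw [h] at h2
      simp at h2
      exact absurd h2 (not_le.2 (hRpos (k+1)))
  have hvolT : ∀ k, volume (T k) = ENNReal.ofReal (3/4 * (R k)^2) * B := by
    intro k
    have h1 : volume (ball (0:E2) (R k)) = ENNReal.ofReal ((R k)^2) * B :=
      volE2_ball' _ (hRpos k).le
    have h2 : volume (ball (0:E2) (R (k+1))) = ENNReal.ofReal ((R k)^2/4) * B := by
      rw [volE2_ball' _ (hRpos (k+1)).le, hRsucc k]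
      congr 2
      ring
    have hsub : ball (0:E2) (R (k+1)) ⊆ ball 0 (R k) :=
      ball_subset_ball (hRanti (Nat.le_succ k))
    rw [hT]
    rw [measure_diff hsub measurableSet_ball.nullMeasurableSet
      (by rw [h2]; exact (ENNReal.mul_lt_top ENNReal.ofReal_lt_top hBlt).ne)]
    rw [h1, h2]
    have hsplit : ENNReal.ofReal ((R k)^2) = ENNReal.ofReal (3/4 * (R k)^2) + ENNReal.ofReal ((R k)^2/4) := by
      rw [← ENNReal.ofReal_add (by positivity) (by positivity)]
      congr 1
      ring
    rw [hsplit, add_mul]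
    exact ENNReal.add_sub_cancel_right (by exact (ENNReal.mul_lt_top ENNReal.ofReal_lt_top hBlt).ne)
  have hshell : ∀ k, ENNReal.ofReal (3/4) * B ≤ ∫⁻ y in T k, ENNReal.ofReal (‖y‖ ^ (-2:ℝ)) := by
    intro k
    have hbound : ∀ y ∈ T k, ENNReal.ofReal ((R k) ^ (-2:ℝ)) ≤ ENNReal.ofReal (‖y‖ ^ (-2:ℝ)) := by
      intro y hy
      have h1 : ‖y‖ < R k := mem_ball_zero_iff.1 hy.1
      have h2 : ¬ ‖y‖ < R (k+1) := fun hc => hy.2 (mem_ball_zero_iff.2 hc)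
      push_neg at h2
      have hy0 : 0 < ‖y‖ := lt_of_lt_of_le (hRpos (k+1)) h2
      exact ENNReal.ofReal_le_ofReal
        (Real.rpow_le_rpow_of_nonpos hy0 h1.le (by norm_num))
    calc ENNReal.ofReal (3/4) * B
        = ENNReal.ofReal ((R k) ^ (-2:ℝ)) * (ENNReal.ofReal (3/4 * (R k)^2) * B) := by
          rw [← mul_assoc, ← ENNReal.ofReal_mul (Real.rpow_nonneg (hRpos k).le _)]
          congr 2
          rw [show (-2:ℝ) = -((2:ℕ):ℝ) from by norm_num, Real.rpow_neg (hRpos k).le,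
            Real.rpow_natCast]
          field_simp
          exact (div_self (hRpos k).ne').symm
      _ = ENNReal.ofReal ((R k) ^ (-2:ℝ)) * volume (T k) := by rw [hvolT k]
      _ = ∫⁻ _ in T k, ENNReal.ofReal ((R k) ^ (-2:ℝ)) := (setLIntegral_const _ _).symm
      _ ≤ ∫⁻ y in T k, ENNReal.ofReal (‖y‖ ^ (-2:ℝ)) := setLIntegral_mono' (hTmeas k) hbound
  refine top_le_iff.1 ?_
  calc (⊤ : ℝ≥0∞) = ∑' _ : ℕ, ENNReal.ofReal (3/4) * B := by
        rw [ENNReal.tsum_const_eq_top_of_ne_zero]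
        exact mul_ne_zero (by simp) hB0
    _ ≤ ∑' k, ∫⁻ y in T k, ENNReal.ofReal (‖y‖ ^ (-2:ℝ)) := ENNReal.tsum_le_tsum hshell
    _ = ∫⁻ y in ⋃ k, T k, ENNReal.ofReal (‖y‖ ^ (-2:ℝ)) := (lintegral_iUnion hTmeas hTdisj _).symm
    _ ≤ _ := lintegral_mono_set hTsub




lemma grad_bound {x : E2} (hx : x ≠ 0) :
    ‖gradient (fun y : E2 => ‖y‖ ^ (-(4/5) : ℝ)) x‖ ≤ ‖x‖ ^ (-(9/5) : ℝ) := by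
  have hnx : ‖x‖ ≠ 0 := norm_ne_zero_iff.2 hx
  have hdn : DifferentiableAt ℝ (fun y : E2 => ‖y‖) x :=
    (contDiffAt_norm (𝕜 := ℝ) (n := 1) hx).differentiableAt one_ne_zero
  have hu : HasFDerivAt (fun y : E2 => ‖y‖ ^ (-(4/5) : ℝ))
      (((-(4/5)) * ‖x‖ ^ ((-(4/5)) - 1 : ℝ)) • fderiv ℝ (fun y : E2 => ‖y‖) x) x :=
    HasFDerivAt.rpow_const hdn.hasFDerivAt (Or.inl hnx)
  have hlip : ‖fderiv ℝ (fun y : E2 => ‖y‖) x‖ ≤ 1 := by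
    have := norm_fderiv_le_of_lipschitz ℝ (x₀ := x) (lipschitzWith_one_norm (E := E2))
    simpa using this
  have hng : ‖gradient (fun y : E2 => ‖y‖ ^ (-(4/5) : ℝ)) x‖
      = ‖fderiv ℝ (fun y : E2 => ‖y‖ ^ (-(4/5) : ℝ)) x‖ := by
    rw [gradient]
    exact LinearIsometryEquiv.norm_map _ _
  rw [hng, hu.fderiv, norm_smul, Real.norm_eq_abs]
  have h1 : |(-(4/5) : ℝ) * ‖x‖ ^ ((-(4/5)) - 1 : ℝ)| = (4/5) * ‖x‖ ^ (-(9/5) : ℝ) := by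
    rw [abs_mul, abs_of_nonneg (Real.rpow_nonneg (norm_nonneg x) _)]
    norm_num
  rw [h1]
  have h2 : (0:ℝ) ≤ ‖x‖ ^ (-(9/5) : ℝ) := Real.rpow_nonneg (norm_nonneg x) _
  nlinarith [norm_nonneg (fderiv ℝ (fun y : E2 => ‖y‖) x)]




noncomputable def pfun (x y : E2) : ℝ := 11/10 + 50 * ‖x - y‖ ^ 2
noncomputable def ufun (x : E2) : ℝ := ‖x‖ ^ (-(4/5) : ℝ)

lemma pfun_diag (x : E2) : pfun x x = 11/10 := by simp [pfun]

lemma ptwise {s : ℝ} (hs0 : 0 < s) {x y : E2} (hx1 : 2/5 < ‖x‖) (hx2 : ‖x‖ < 1/2)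
    (hy1 : ‖y‖ < 1/100) (hy0 : 0 < ‖y‖) :
    ENNReal.ofReal (‖y‖ ^ (-2:ℝ)) ≤ ENNReal.ofReal
      (|ufun x - ufun y| ^ pfun x y / ‖x - y‖ ^ (((2:ℕ):ℝ) + s * pfun x y)) := by
  set t : ℝ := ‖y‖ ^ (-(2/5) : ℝ) with htdef
  have ht0 : 0 ≤ t := Real.rpow_nonneg (norm_nonneg y) _
  have ht3 : 3 ≤ t := by
    have ha : ((1:ℝ)/100) ^ (-(2/5):ℝ) ≤ t :=
      Real.rpow_le_rpow_of_nonpos hy0 hy1.le (by norm_num)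
    have hb : ((1:ℝ)/100) ^ (-(2/5):ℝ) = (100:ℝ) ^ ((2/5):ℝ) := by
      rw [show ((1:ℝ)/100) = ((100:ℝ))⁻¹ from by norm_num,
        Real.inv_rpow (by norm_num), ← Real.rpow_neg (by norm_num)]
      norm_num
    have hc1 : (81:ℝ) ^ ((1/4):ℝ) = 3 := by
      rw [show (81:ℝ) = (3:ℝ)^(4:ℕ) from by norm_num,
        ← Real.rpow_natCast (3:ℝ) 4, ← Real.rpow_mul (by norm_num)]
      norm_num
    have hc2 : (81:ℝ) ^ ((1/4):ℝ) ≤ (100:ℝ) ^ ((1/4):ℝ) :=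
      Real.rpow_le_rpow (by norm_num) (by norm_num) (by norm_num)
    have hc3 : (100:ℝ) ^ ((1/4):ℝ) ≤ (100:ℝ) ^ ((2/5):ℝ) :=
      Real.rpow_le_rpow_of_exponent_le (by norm_num) (by norm_num)
    linarith [hc1 ▸ hc2]
  have hux3 : ufun x ≤ 3 := by
    have ha : ufun x ≤ ((2:ℝ)/5) ^ (-(4/5):ℝ) :=
      Real.rpow_le_rpow_of_nonpos (by norm_num) hx1.le (by norm_num)
    have hb : ((2:ℝ)/5) ^ (-(4/5):ℝ) = ((5:ℝ)/2) ^ ((4/5):ℝ) := by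
      rw [show ((2:ℝ)/5) = ((5:ℝ)/2)⁻¹ from by norm_num,
        Real.inv_rpow (by norm_num), ← Real.rpow_neg (by norm_num)]
      norm_num
    have hc1 : ((5:ℝ)/2) ^ ((4/5):ℝ) ≤ ((5:ℝ)/2) ^ (1:ℝ) :=
      Real.rpow_le_rpow_of_exponent_le (by norm_num) (by norm_num)
    rw [Real.rpow_one] at hc1
    linarith [hb ▸ ha]
  have huy : ufun y = t ^ (2:ℕ) := by
    rw [ufun, htdef, ← Real.rpow_natCast (‖y‖ ^ (-(2/5):ℝ)) 2,
      ← Real.rpow_mul (norm_nonneg y)]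
    norm_num
  have hbase : t ≤ |ufun x - ufun y| := by
    rw [abs_sub_comm]
    refine le_trans ?_ (le_abs_self _)
    rw [huy]
    nlinarith
  have hp5 : 5 ≤ pfun x y := by
    have h1 : ‖x‖ - ‖y‖ ≤ ‖x - y‖ := norm_sub_norm_le x y
    have h2 : (39:ℝ)/100 ≤ ‖x - y‖ := by linarith
    rw [pfun]
    nlinarith [sq_nonneg (‖x - y‖ - 39/100)]
  have hxy0 : 0 < ‖x - y‖ := by
    have h1 : ‖x‖ - ‖y‖ ≤ ‖x - y‖ := norm_sub_norm_le x y
    linarith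
  have hxy1 : ‖x - y‖ ≤ 1 := by
    have := norm_sub_le x y
    linarith
  have hexp0 : 0 ≤ ((2:ℕ):ℝ) + s * pfun x y := by
    have := mul_nonneg hs0.le (le_trans (by norm_num : (0:ℝ) ≤ 5) hp5)
    push_cast
    linarith
  have hden1 : ‖x - y‖ ^ (((2:ℕ):ℝ) + s * pfun x y) ≤ 1 :=
    Real.rpow_le_one (norm_nonneg _) hxy1 hexp0
  have hdenpos : 0 < ‖x - y‖ ^ (((2:ℕ):ℝ) + s * pfun x y) :=
    Real.rpow_pos_of_pos hxy0 _
  have hnum : ‖y‖ ^ (-2:ℝ) ≤ |ufun x - ufun y| ^ pfun x y := by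
    have h1 : t ^ pfun x y ≤ |ufun x - ufun y| ^ pfun x y :=
      Real.rpow_le_rpow ht0 hbase (le_trans (by norm_num) hp5)
    have h2 : t ^ pfun x y = ‖y‖ ^ ((-(2/5)) * pfun x y) := by
      rw [htdef, ← Real.rpow_mul (norm_nonneg y)]
    have h3 : ‖y‖ ^ (-2:ℝ) ≤ ‖y‖ ^ ((-(2/5)) * pfun x y) :=
      Real.rpow_le_rpow_of_exponent_ge hy0 (by linarith) (by nlinarith)
    rw [h2] at h1
    linarith
  refine ENNReal.ofReal_le_ofReal ?_
  rw [le_div_iff₀ hdenpos]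
  calc ‖y‖ ^ (-2:ℝ) * ‖x - y‖ ^ (((2:ℕ):ℝ) + s * pfun x y)
      ≤ ‖y‖ ^ (-2:ℝ) * 1 :=
        mul_le_mul_of_nonneg_left hden1 (Real.rpow_nonneg (norm_nonneg y) _)
    _ = ‖y‖ ^ (-2:ℝ) := mul_one _
    _ ≤ |ufun x - ufun y| ^ pfun x y := hnum





lemma pfun_smooth : ContDiff ℝ (⊤ : ℕ∞) (Function.uncurry pfun) := by
  have : Function.uncurry pfun
      = fun z : E2 × E2 => 11/10 + 50 * ‖z.1 - z.2‖ ^ 2 := rfl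
  rw [this]
  exact contDiff_const.add (contDiff_const.mul
    (ContDiff.norm_sq (𝕜 := ℝ) (contDiff_fst.sub contDiff_snd)))

lemma pfun_bounds : ∀ x ∈ ball (0:E2) (1/2), ∀ y ∈ ball (0:E2) (1/2),
    (11:ℝ)/10 ≤ pfun x y ∧ pfun x y ≤ 52 := by
  intro x hx y hy
  have hx' : ‖x‖ < 1/2 := mem_ball_zero_iff.1 hx
  have hy' : ‖y‖ < 1/2 := mem_ball_zero_iff.1 hy
  have h1 : ‖x - y‖ ≤ 1 := by
    have := norm_sub_le x y
    linarith
  have h2 : ‖x - y‖ ^ 2 ≤ 1 := pow_le_one₀ (norm_nonneg _) h1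
  rw [pfun]
  constructor
  · nlinarith [sq_nonneg ‖x - y‖]
  · nlinarith

lemma ufun_smooth : ContDiffOn ℝ (⊤ : ℕ∞) ufun (ball (0:E2) (1/2) \ {0}) := by
  intro x hx
  have hx0 : x ≠ 0 := fun h => hx.2 (by simp [h])
  have hnx : ‖x‖ ≠ 0 := norm_ne_zero_iff.2 hx0
  exact ((contDiffAt_norm (𝕜 := ℝ) hx0).rpow_const_of_ne hnx).contDiffWithinAt

lemma modular_inner_top {s : ℝ} (hs0 : 0 < s) {x : E2}
    (hx1 : 2/5 < ‖x‖) (hx2 : ‖x‖ < 1/2) :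
    ∫⁻ y in ball (0:E2) (1/2), ENNReal.ofReal
      (|ufun x - ufun y| ^ pfun x y / ‖x - y‖ ^ (((2:ℕ):ℝ) + s * pfun x y)) = ⊤ := by
  refine top_le_iff.1 ?_
  have hptw : ∀ y ∈ ball (0:E2) (1/100) \ {0},
      ENNReal.ofReal (‖y‖ ^ (-2:ℝ)) ≤ ENNReal.ofReal
        (|ufun x - ufun y| ^ pfun x y / ‖x - y‖ ^ (((2:ℕ):ℝ) + s * pfun x y)) := by
    intro y hy
    have hy1 : ‖y‖ < 1/100 := mem_ball_zero_iff.1 hy.1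
    have hy0 : 0 < ‖y‖ := norm_pos_iff.2 (fun h => hy.2 (by simp [h]))
    exact ptwise hs0 hx1 hx2 hy1 hy0
  calc (⊤:ℝ≥0∞) = ∫⁻ y in ball (0:E2) (1/100) \ {0},
        ENNReal.ofReal (‖y‖ ^ (-2:ℝ)) := lintegral_radial_eq_top.symm
    _ ≤ ∫⁻ y in ball (0:E2) (1/100) \ {0}, ENNReal.ofReal
          (|ufun x - ufun y| ^ pfun x y / ‖x - y‖ ^ (((2:ℕ):ℝ) + s * pfun x y)) :=
        setLIntegral_mono' (measurableSet_ball.diff (measurableSet_singleton _)) hptw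
    _ ≤ _ := lintegral_mono_set (diff_subset.trans (ball_subset_ball (by norm_num)))

lemma modular_outer_top {s : ℝ} (hs0 : 0 < s) :
    ∫⁻ x in ball (0:E2) (1/2), ∫⁻ y in ball (0:E2) (1/2), ENNReal.ofReal
      (|ufun x - ufun y| ^ pfun x y / ‖x - y‖ ^ (((2:ℕ):ℝ) + s * pfun x y)) = ⊤ := by
  set c : E2 := EuclideanSpace.single (0 : Fin 2) (9/20 : ℝ) with hcdef
  have hcnorm : ‖c‖ = 9/20 := by
    rw [hcdef, EuclideanSpace.norm_single]
    norm_num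
  have hAprop : ∀ x ∈ ball c (1/20), 2/5 < ‖x‖ ∧ ‖x‖ < 1/2 := by
    intro x hx
    have hd : ‖x - c‖ < 1/20 := by rwa [mem_ball, dist_eq_norm] at hx
    have h1 : ‖x‖ ≤ ‖x - c‖ + ‖c‖ := by
      calc ‖x‖ = ‖x - c + c‖ := by rw [sub_add_cancel]
        _ ≤ ‖x - c‖ + ‖c‖ := norm_add_le _ _
    have h2 : ‖c‖ - ‖x - c‖ ≤ ‖x‖ := by
      have h3 : ‖c‖ - ‖x‖ ≤ ‖c - x‖ := norm_sub_norm_le c x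
      rw [norm_sub_rev] at h3
      linarith
    rw [hcnorm] at h1 h2
    constructor <;> linarith
  have hAsub : ball c (1/20) ⊆ ball (0:E2) (1/2) := fun x hx =>
    mem_ball_zero_iff.2 (hAprop x hx).2
  refine top_le_iff.1 ?_
  have hAconst : ∫⁻ _ in ball c (1/20), (⊤:ℝ≥0∞) = ⊤ := by
    rw [setLIntegral_const, ENNReal.top_mul (measure_ball_pos volume c (by norm_num)).ne']
  calc (⊤:ℝ≥0∞) = ∫⁻ _ in ball c (1/20), (⊤:ℝ≥0∞) := hAconst.symm
    _ ≤ ∫⁻ x in ball c (1/20), ∫⁻ y in ball (0:E2) (1/2), ENNReal.ofReal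
          (|ufun x - ufun y| ^ pfun x y / ‖x - y‖ ^ (((2:ℕ):ℝ) + s * pfun x y)) :=
        setLIntegral_mono' measurableSet_ball (fun x hx =>
          le_of_eq (modular_inner_top hs0 (hAprop x hx).1 (hAprop x hx).2).symm)
    _ ≤ _ := lintegral_mono_set hAsub

lemma grad_bound' {x : E2} (hx : x ≠ 0) :
    ‖gradient ufun x‖ ≤ ‖x‖ ^ (-(9/5) : ℝ) := by
  have : ufun = fun y : E2 => ‖y‖ ^ (-(4/5) : ℝ) := rfl
  rw [this]
  exact grad_bound hx

lemma gradfin : ∫⁻ x in ball (0:E2) (1/2) \ {0},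
    ENNReal.ofReal (‖gradient ufun x‖ ^ (11/10:ℝ)) < ⊤ := by
  have hmeas : MeasurableSet (ball (0:E2) (1/2) \ {0}) :=
    measurableSet_ball.diff (measurableSet_singleton 0)
  have hb : ∀ x ∈ ball (0:E2) (1/2) \ {0},
      ENNReal.ofReal (‖gradient ufun x‖ ^ (11/10:ℝ))
      ≤ ENNReal.ofReal (‖x‖ ^ (-(99/50):ℝ)) := by
    intro x hx
    have hx0 : x ≠ 0 := fun h => hx.2 (by simp [h])
    refine ENNReal.ofReal_le_ofReal ?_
    calc ‖gradient ufun x‖ ^ (11/10:ℝ) ≤ (‖x‖ ^ (-(9/5):ℝ)) ^ (11/10:ℝ) :=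
          Real.rpow_le_rpow (norm_nonneg _) (grad_bound' hx0) (by norm_num)
      _ = ‖x‖ ^ (-(99/50):ℝ) := by
          rw [← Real.rpow_mul (norm_nonneg x)]; norm_num
  calc ∫⁻ x in ball (0:E2) (1/2) \ {0}, ENNReal.ofReal (‖gradient ufun x‖ ^ (11/10:ℝ))
      ≤ ∫⁻ x in ball (0:E2) (1/2) \ {0}, ENNReal.ofReal (‖x‖ ^ (-(99/50):ℝ)) :=
        setLIntegral_mono' hmeas hb
    _ ≤ ∫⁻ x in ball (0:E2) 1, ENNReal.ofReal (‖x‖ ^ (-(99/50):ℝ)) :=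
        lintegral_mono_set (diff_subset.trans (ball_subset_ball (by norm_num)))
    _ < ⊤ := lintegral_radial_lt_top (by norm_num) (by norm_num)


end BBMAux

/-- **Corollary 1.3 (failure of the BBM equality)**: there exist `n ≥ 2`, an open `Ω ⊆ ℝⁿ`,
a smooth exponent `p` satisfying (P) and `u ∈ W^{1,p̄(·)}(Ω)` such that
`∫_Ω K_{n,p̄(x)} |∇u(x)|^{p̄(x)} dx` is finite while the modular is `+∞` for every `s ∈ (0,1)`. -/


theorem bbm_equality_fails :
    ∃ (n : ℕ), 2 ≤ n ∧
    ∃ Ω : Set (EuclideanSpace ℝ (Fin n)), IsOpen Ω ∧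
    ∃ p : EuclideanSpace ℝ (Fin n) → EuclideanSpace ℝ (Fin n) → ℝ,
      ContDiff ℝ (⊤ : ℕ∞) (Function.uncurry p) ∧
      (∃ pm pp : ℝ, 1 < pm ∧ ∀ x ∈ Ω, ∀ y ∈ Ω, pm ≤ p x y ∧ p x y ≤ pp) ∧
      ∃ u : EuclideanSpace ℝ (Fin n) → ℝ,
        ContDiffOn ℝ (⊤ : ℕ∞) u (Ω \ {0}) ∧
        (∫⁻ x in Ω, ENNReal.ofReal (|u x| ^ p x x)) < ⊤ ∧
        (∫⁻ x in Ω \ {0}, ENNReal.ofReal (‖gradient u x‖ ^ p x x)) < ⊤ ∧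
        (∫⁻ x in Ω, ENNReal.ofReal (Kconst n (p x x) * ‖gradient u x‖ ^ p x x)) < ⊤ ∧
        ∀ s ∈ Set.Ioo (0 : ℝ) 1, varModular n Ω p s u = ⊤ := by
  classical
  refine ⟨2, le_rfl, ball 0 (1/2), isOpen_ball, BBMAux.pfun, BBMAux.pfun_smooth,
    ⟨11/10, 52, by norm_num, BBMAux.pfun_bounds⟩, BBMAux.ufun, BBMAux.ufun_smooth,
    ?_, ?_, ?_, ?_⟩
  · -- ∫ |u|^p̄ < ⊤
    have key : ∀ x : BBMAux.E2, ENNReal.ofReal (|BBMAux.ufun x| ^ BBMAux.pfun x x)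
        = ENNReal.ofReal (‖x‖ ^ (-(22/25):ℝ)) := by
      intro x
      rw [BBMAux.pfun_diag x]
      congr 1
      show |‖x‖ ^ (-(4/5) : ℝ)| ^ (11/10 : ℝ) = _
      rw [abs_of_nonneg (Real.rpow_nonneg (norm_nonneg x) _),
        ← Real.rpow_mul (norm_nonneg x)]
      norm_num
    rw [lintegral_congr key]
    calc ∫⁻ x in ball (0:BBMAux.E2) (1/2), ENNReal.ofReal (‖x‖ ^ (-(22/25):ℝ))
        ≤ ∫⁻ x in ball (0:BBMAux.E2) 1, ENNReal.ofReal (‖x‖ ^ (-(22/25):ℝ)) :=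
          lintegral_mono_set (ball_subset_ball (by norm_num))
      _ < ⊤ := BBMAux.lintegral_radial_lt_top (by norm_num) (by norm_num)
  · -- ∫ ‖∇u‖^p̄ < ⊤
    have key : ∀ x : BBMAux.E2,
        ENNReal.ofReal (‖gradient BBMAux.ufun x‖ ^ BBMAux.pfun x x)
        = ENNReal.ofReal (‖gradient BBMAux.ufun x‖ ^ (11/10:ℝ)) := fun x => by
      rw [BBMAux.pfun_diag x]
    rw [lintegral_congr key]
    exact BBMAux.gradfin
  · -- ∫ K ‖∇u‖^p̄ < ⊤
    have hrestr : (volume : Measure BBMAux.E2).restrict (ball 0 (1/2) \ {0})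
        = volume.restrict (ball 0 (1/2)) := by
      refine Measure.restrict_congr_set ?_
      refine diff_ae_eq_self.2 (measure_mono_null ?_ (measure_singleton (0:BBMAux.E2)))
      first
        | exact inter_subset_left
        | exact inter_subset_right
    calc ∫⁻ x in ball (0:BBMAux.E2) (1/2),
          ENNReal.ofReal (Kconst 2 (BBMAux.pfun x x) * ‖gradient BBMAux.ufun x‖ ^ BBMAux.pfun x x)
        ≤ ∫⁻ x in ball (0:BBMAux.E2) (1/2), ENNReal.ofReal |Kconst 2 (11/10)|
            * ENNReal.ofReal (‖gradient BBMAux.ufun x‖ ^ (11/10:ℝ)) := by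
          refine lintegral_mono fun x => ?_
          rw [BBMAux.pfun_diag x, ← ENNReal.ofReal_mul (abs_nonneg _)]
          exact ENNReal.ofReal_le_ofReal
            (mul_le_mul_of_nonneg_right (le_abs_self _)
              (Real.rpow_nonneg (norm_nonneg _) _))
      _ = ENNReal.ofReal |Kconst 2 (11/10)|
            * ∫⁻ x in ball (0:BBMAux.E2) (1/2),
                ENNReal.ofReal (‖gradient BBMAux.ufun x‖ ^ (11/10:ℝ)) :=
          lintegral_const_mul' _ _ ENNReal.ofReal_ne_top
      _ < ⊤ := by
          rw [← hrestr]
          exact ENNReal.mul_lt_top ENNReal.ofReal_lt_top BBMAux.gradfin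
  · -- divergence
    intro s hs
    obtain ⟨hs0, hs1⟩ := hs
    have hs01 : 0 < s * (1 - s) := by nlinarith
    rw [varModular, ENNReal.mul_eq_top]
    left
    exact ⟨(ENNReal.ofReal_pos.2 hs01).ne', BBMAux.modular_outer_top hs0⟩
end

section
/- Let n ≥ 1 be an integer, let Ω ⊆ ℝⁿ be an open set, let p : Ω × Ω → ℝ be measurable satisfying (P), and let s ∈ (0,1). Let u and u_k (k ∈ ℕ) be measurable functions on Ω with finite seminorms [u]_{s,p}, [u_k]_{s,p} < ∞. Then [u_k − u]_{s,p} → 0 as k → ∞ if and only if ϱ_{s,p}(u_k − u) → 0 as k → ∞; and if either holds, then ϱ_{s,p}(u_k) → ϱ_{s,p}(u) as k → ∞. -/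
open MeasureTheory Filter Metric Set
open scoped ENNReal Topology

/-- The Gagliardo seminorm `[u]_{s,p} = inf {λ > 0 : ϱ_{s,p}(u/λ) ≤ 1}`, valued in `[0,∞]`
with the convention `inf ∅ = +∞`. -/
noncomputable def wsSeminorm (n : ℕ) (Ω : Set (EuclideanSpace ℝ (Fin n)))
    (p : EuclideanSpace ℝ (Fin n) → EuclideanSpace ℝ (Fin n) → ℝ) (s : ℝ)
    (u : EuclideanSpace ℝ (Fin n) → ℝ) : ℝ≥0∞ :=
  sInf ((fun lam : ℝ => ENNReal.ofReal lam) ''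
    {lam : ℝ | 0 < lam ∧ varModular n Ω p s (fun x => u x / lam) ≤ 1})
section Aux

variable {n : ℕ} {Ω : Set (EuclideanSpace ℝ (Fin n))}
  {p : EuclideanSpace ℝ (Fin n) → EuclideanSpace ℝ (Fin n) → ℝ} {s : ℝ}

/-- Measurability of the modular integrand. -/
lemma modular_integrand_measurable (hp : Measurable (Function.uncurry p))
    {f : EuclideanSpace ℝ (Fin n) → ℝ} (hf : Measurable f) :
    Measurable fun z : EuclideanSpace ℝ (Fin n) × EuclideanSpace ℝ (Fin n) =>
      ENNReal.ofReal (|f z.1 - f z.2| ^ p z.1 z.2 / ‖z.1 - z.2‖ ^ ((n : ℝ) + s * p z.1 z.2)) := by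
  have hp' : Measurable fun z : EuclideanSpace ℝ (Fin n) × EuclideanSpace ℝ (Fin n) =>
      p z.1 z.2 := hp
  apply Measurable.ennreal_ofReal
  apply Measurable.div
  · exact (((hf.comp measurable_fst).sub (hf.comp measurable_snd)).abs).pow hp'
  · exact (continuous_fst.sub continuous_snd).norm.measurable.pow
      (measurable_const.add (measurable_const.mul hp'))

/-- Two-term comparison for iterated lower integrals. -/
lemma double_lintegral_le (hΩ : MeasurableSet Ω)
    (F G1 G2 : EuclideanSpace ℝ (Fin n) → EuclideanSpace ℝ (Fin n) → ℝ≥0∞)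
    (c1 c2 : ℝ≥0∞) (hc1 : c1 ≠ ⊤) (hc2 : c2 ≠ ⊤)
    (hG1 : Measurable fun z : EuclideanSpace ℝ (Fin n) × EuclideanSpace ℝ (Fin n) => G1 z.1 z.2)
    (hG2 : Measurable fun z : EuclideanSpace ℝ (Fin n) × EuclideanSpace ℝ (Fin n) => G2 z.1 z.2)
    (h : ∀ x ∈ Ω, ∀ y ∈ Ω, F x y ≤ c1 * G1 x y + c2 * G2 x y) :
    ∫⁻ x in Ω, ∫⁻ y in Ω, F x y ≤
      c1 * (∫⁻ x in Ω, ∫⁻ y in Ω, G1 x y) + c2 * (∫⁻ x in Ω, ∫⁻ y in Ω, G2 x y) := by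
  have hA : Measurable fun x => ∫⁻ y in Ω, G1 x y := Measurable.lintegral_prod_right' hG1
  have hB : Measurable fun x => ∫⁻ y in Ω, G2 x y := Measurable.lintegral_prod_right' hG2
  calc ∫⁻ x in Ω, ∫⁻ y in Ω, F x y
      ≤ ∫⁻ x in Ω, (c1 * (∫⁻ y in Ω, G1 x y) + c2 * ∫⁻ y in Ω, G2 x y) := by
        refine setLIntegral_mono' hΩ fun x hx => ?_
        have hg1x : Measurable fun y => G1 x y := hG1.comp measurable_prodMk_left
        calc ∫⁻ y in Ω, F x y ≤ ∫⁻ y in Ω, (c1 * G1 x y + c2 * G2 x y) :=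
              setLIntegral_mono' hΩ fun y hy => h x hx y hy
          _ = (∫⁻ y in Ω, c1 * G1 x y) + ∫⁻ y in Ω, c2 * G2 x y :=
              lintegral_add_left (hg1x.const_mul c1) _
          _ = c1 * (∫⁻ y in Ω, G1 x y) + c2 * ∫⁻ y in Ω, G2 x y := by
              rw [lintegral_const_mul' c1 _ hc1, lintegral_const_mul' c2 _ hc2]
    _ = (∫⁻ x in Ω, c1 * ∫⁻ y in Ω, G1 x y) + ∫⁻ x in Ω, c2 * ∫⁻ y in Ω, G2 x y :=
        lintegral_add_left (hA.const_mul c1) _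
    _ = c1 * (∫⁻ x in Ω, ∫⁻ y in Ω, G1 x y) + c2 * (∫⁻ x in Ω, ∫⁻ y in Ω, G2 x y) := by
        rw [lintegral_const_mul' c1 _ hc1, lintegral_const_mul' c2 _ hc2]


/-- Young-type inequality for rpow. -/
lemma young_abs_rpow {pp q ε : ℝ} (hq1 : 1 ≤ q) (hqpp : q ≤ pp) (hε : 0 < ε) (a b : ℝ) :
    |a + b| ^ q ≤ (1 + ε) ^ (pp - 1) * |a| ^ q + (1 + ε⁻¹) ^ (pp - 1) * |b| ^ q := by
  have h1ε : (0:ℝ) < 1 + ε := by linarith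
  have hεi : (0:ℝ) < ε⁻¹ := inv_pos.2 hε
  have h1ε' : (0:ℝ) < 1 + ε⁻¹ := by linarith
  have hq0 : (0:ℝ) ≤ q := by linarith
  have habs : |a + b| ^ q ≤ (|a| + |b|) ^ q :=
    Real.rpow_le_rpow (abs_nonneg _) (abs_add_le a b) hq0
  have hc := (convexOn_rpow hq1).2 (show (1 + ε) * |a| ∈ Ici (0:ℝ) by
      simp only [mem_Ici]; positivity)
    (show (1 + ε⁻¹) * |b| ∈ Ici (0:ℝ) by simp only [mem_Ici]; positivity)
    (show (0:ℝ) ≤ (1 + ε)⁻¹ by positivity)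
    (show (0:ℝ) ≤ ε / (1 + ε) by positivity)
    (by field_simp)
  simp only [smul_eq_mul] at hc
  have hx : (1 + ε)⁻¹ * ((1 + ε) * |a|) + ε / (1 + ε) * ((1 + ε⁻¹) * |b|) = |a| + |b| := by
    field_simp
    ring
  rw [hx] at hc
  have e1 : (1 + ε)⁻¹ * ((1 + ε) * |a|) ^ q = (1 + ε) ^ (q - 1) * |a| ^ q := by
    rw [Real.mul_rpow h1ε.le (abs_nonneg a), Real.rpow_sub h1ε, Real.rpow_one]
    ring
  have e2 : ε / (1 + ε) * ((1 + ε⁻¹) * |b|) ^ q = (1 + ε⁻¹) ^ (q - 1) * |b| ^ q := by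
    rw [Real.mul_rpow h1ε'.le (abs_nonneg b), Real.rpow_sub h1ε', Real.rpow_one]
    have hee : ε / (1 + ε) = (1 + ε⁻¹)⁻¹ := by
      have : (1 + ε⁻¹) = (1 + ε) / ε := by field_simp; ring
      rw [this, inv_div]
    rw [hee]
    ring
  rw [e1, e2] at hc
  have m1 : (1 + ε) ^ (q - 1) ≤ (1 + ε) ^ (pp - 1) :=
    Real.rpow_le_rpow_of_exponent_le (by linarith) (by linarith)
  have m2 : (1 + ε⁻¹) ^ (q - 1) ≤ (1 + ε⁻¹) ^ (pp - 1) :=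
    Real.rpow_le_rpow_of_exponent_le (by linarith) (by linarith)
  refine habs.trans (hc.trans (add_le_add ?_ ?_))
  · exact mul_le_mul_of_nonneg_right m1 (Real.rpow_nonneg (abs_nonneg a) q)
  · exact mul_le_mul_of_nonneg_right m2 (Real.rpow_nonneg (abs_nonneg b) q)


lemma varModular_add_le (hΩ : MeasurableSet Ω) (hp : Measurable (Function.uncurry p)) {pp : ℝ}
    (hp_bound : ∀ x ∈ Ω, ∀ y ∈ Ω, 1 ≤ p x y ∧ p x y ≤ pp)
    {f g : EuclideanSpace ℝ (Fin n) → ℝ} (hf : Measurable f) (hg : Measurable g)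
    {ε : ℝ} (hε : 0 < ε) :
    varModular n Ω p s (fun x => f x + g x) ≤
      ENNReal.ofReal ((1 + ε) ^ (pp - 1)) * varModular n Ω p s f +
      ENNReal.ofReal ((1 + ε⁻¹) ^ (pp - 1)) * varModular n Ω p s g := by
  have hA0 : (0:ℝ) ≤ (1 + ε) ^ (pp - 1) := Real.rpow_nonneg (by linarith) _
  have hB0 : (0:ℝ) ≤ (1 + ε⁻¹) ^ (pp - 1) := Real.rpow_nonneg (by positivity) _
  have key : (∫⁻ x in Ω, ∫⁻ y in Ω,
        ENNReal.ofReal (|(f x + g x) - (f y + g y)| ^ p x y /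
          ‖x - y‖ ^ ((n : ℝ) + s * p x y))) ≤
      ENNReal.ofReal ((1 + ε) ^ (pp - 1)) * (∫⁻ x in Ω, ∫⁻ y in Ω,
        ENNReal.ofReal (|f x - f y| ^ p x y / ‖x - y‖ ^ ((n : ℝ) + s * p x y))) +
      ENNReal.ofReal ((1 + ε⁻¹) ^ (pp - 1)) * (∫⁻ x in Ω, ∫⁻ y in Ω,
        ENNReal.ofReal (|g x - g y| ^ p x y / ‖x - y‖ ^ ((n : ℝ) + s * p x y))) := by
    refine double_lintegral_le hΩ _ _ _ _ _ ENNReal.ofReal_ne_top ENNReal.ofReal_ne_top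
      (modular_integrand_measurable hp hf) (modular_integrand_measurable hp hg) ?_
    intro x hx y hy
    have hD : (0:ℝ) ≤ ‖x - y‖ ^ ((n : ℝ) + s * p x y) := Real.rpow_nonneg (norm_nonneg _) _
    have hy' : |(f x + g x) - (f y + g y)| ^ p x y ≤
        (1 + ε) ^ (pp - 1) * |f x - f y| ^ p x y +
        (1 + ε⁻¹) ^ (pp - 1) * |g x - g y| ^ p x y := by
      have := young_abs_rpow (hp_bound x hx y hy).1 (hp_bound x hx y hy).2 hε
        (f x - f y) (g x - g y)
      have harg : (f x + g x) - (f y + g y) = (f x - f y) + (g x - g y) := by ring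
      rw [harg]
      exact this
    have hdiv : |(f x + g x) - (f y + g y)| ^ p x y / ‖x - y‖ ^ ((n : ℝ) + s * p x y) ≤
        (1 + ε) ^ (pp - 1) * (|f x - f y| ^ p x y / ‖x - y‖ ^ ((n : ℝ) + s * p x y)) +
        (1 + ε⁻¹) ^ (pp - 1) * (|g x - g y| ^ p x y / ‖x - y‖ ^ ((n : ℝ) + s * p x y)) := by
      have hinv : (0:ℝ) ≤ (‖x - y‖ ^ ((n : ℝ) + s * p x y))⁻¹ := inv_nonneg.2 hD
      calc |(f x + g x) - (f y + g y)| ^ p x y / ‖x - y‖ ^ ((n : ℝ) + s * p x y)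
          = |(f x + g x) - (f y + g y)| ^ p x y * (‖x - y‖ ^ ((n : ℝ) + s * p x y))⁻¹ :=
            div_eq_mul_inv _ _
        _ ≤ ((1 + ε) ^ (pp - 1) * |f x - f y| ^ p x y +
              (1 + ε⁻¹) ^ (pp - 1) * |g x - g y| ^ p x y) *
              (‖x - y‖ ^ ((n : ℝ) + s * p x y))⁻¹ := mul_le_mul_of_nonneg_right hy' hinv
        _ = _ := by ring
    calc ENNReal.ofReal (|(f x + g x) - (f y + g y)| ^ p x y /
          ‖x - y‖ ^ ((n : ℝ) + s * p x y))
        ≤ ENNReal.ofReal ((1 + ε) ^ (pp - 1) *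
            (|f x - f y| ^ p x y / ‖x - y‖ ^ ((n : ℝ) + s * p x y)) +
          (1 + ε⁻¹) ^ (pp - 1) *
            (|g x - g y| ^ p x y / ‖x - y‖ ^ ((n : ℝ) + s * p x y))) :=
          ENNReal.ofReal_le_ofReal hdiv
      _ = ENNReal.ofReal ((1 + ε) ^ (pp - 1)) *
            ENNReal.ofReal (|f x - f y| ^ p x y / ‖x - y‖ ^ ((n : ℝ) + s * p x y)) +
          ENNReal.ofReal ((1 + ε⁻¹) ^ (pp - 1)) *
            ENNReal.ofReal (|g x - g y| ^ p x y / ‖x - y‖ ^ ((n : ℝ) + s * p x y)) := by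
          rw [ENNReal.ofReal_add (by positivity) (by positivity),
            ENNReal.ofReal_mul hA0, ENNReal.ofReal_mul hB0]
  unfold varModular
  calc ENNReal.ofReal (s * (1 - s)) * ∫⁻ x in Ω, ∫⁻ y in Ω,
        ENNReal.ofReal (|(f x + g x) - (f y + g y)| ^ p x y /
          ‖x - y‖ ^ ((n : ℝ) + s * p x y))
      ≤ ENNReal.ofReal (s * (1 - s)) *
        (ENNReal.ofReal ((1 + ε) ^ (pp - 1)) * (∫⁻ x in Ω, ∫⁻ y in Ω,
          ENNReal.ofReal (|f x - f y| ^ p x y / ‖x - y‖ ^ ((n : ℝ) + s * p x y))) +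
        ENNReal.ofReal ((1 + ε⁻¹) ^ (pp - 1)) * (∫⁻ x in Ω, ∫⁻ y in Ω,
          ENNReal.ofReal (|g x - g y| ^ p x y / ‖x - y‖ ^ ((n : ℝ) + s * p x y)))) :=
        mul_le_mul_right key _
    _ = _ := by ring


lemma varModular_ratio_le (hΩ : MeasurableSet Ω) (hp : Measurable (Function.uncurry p))
    {pm pp : ℝ} (hp_bound : ∀ x ∈ Ω, ∀ y ∈ Ω, pm ≤ p x y ∧ p x y ≤ pp)
    {f g : EuclideanSpace ℝ (Fin n) → ℝ} (hg : Measurable g) {c : ℝ} (hc : 0 < c)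
    (hfg : ∀ x, f x = c * g x) :
    varModular n Ω p s f ≤ ENNReal.ofReal (max (c ^ pm) (c ^ pp)) * varModular n Ω p s g := by
  have hmax0 : (0:ℝ) ≤ max (c ^ pm) (c ^ pp) :=
    le_max_of_le_left (Real.rpow_nonneg hc.le _)
  have key : (∫⁻ x in Ω, ∫⁻ y in Ω,
        ENNReal.ofReal (|f x - f y| ^ p x y / ‖x - y‖ ^ ((n : ℝ) + s * p x y))) ≤
      ENNReal.ofReal (max (c ^ pm) (c ^ pp)) * (∫⁻ x in Ω, ∫⁻ y in Ω,
        ENNReal.ofReal (|g x - g y| ^ p x y / ‖x - y‖ ^ ((n : ℝ) + s * p x y))) := by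
    have h2 := double_lintegral_le hΩ
      (fun x y => ENNReal.ofReal (|f x - f y| ^ p x y / ‖x - y‖ ^ ((n : ℝ) + s * p x y)))
      (fun x y => ENNReal.ofReal (|g x - g y| ^ p x y / ‖x - y‖ ^ ((n : ℝ) + s * p x y)))
      (fun x y => ENNReal.ofReal (|g x - g y| ^ p x y / ‖x - y‖ ^ ((n : ℝ) + s * p x y)))
      (ENNReal.ofReal (max (c ^ pm) (c ^ pp))) 0 ENNReal.ofReal_ne_top (by simp)
      (modular_integrand_measurable hp hg) (modular_integrand_measurable hp hg) ?_
    · simpa using h2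
    intro x hx y hy
    have hD : (0:ℝ) ≤ ‖x - y‖ ^ ((n : ℝ) + s * p x y) := Real.rpow_nonneg (norm_nonneg _) _
    have habs : |f x - f y| = c * |g x - g y| := by
      rw [hfg x, hfg y, ← mul_sub, abs_mul, abs_of_pos hc]
    have hcq : c ^ p x y ≤ max (c ^ pm) (c ^ pp) := by
      rcases le_total 1 c with h1 | h1
      · exact le_max_of_le_right
          (Real.rpow_le_rpow_of_exponent_le h1 (hp_bound x hx y hy).2)
      · exact le_max_of_le_left
          (Real.rpow_le_rpow_of_exponent_ge hc h1 (hp_bound x hx y hy).1)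
    have hnum : |f x - f y| ^ p x y ≤
        max (c ^ pm) (c ^ pp) * |g x - g y| ^ p x y := by
      rw [habs, Real.mul_rpow hc.le (abs_nonneg _)]
      exact mul_le_mul_of_nonneg_right hcq (Real.rpow_nonneg (abs_nonneg _) _)
    have hdiv : |f x - f y| ^ p x y / ‖x - y‖ ^ ((n : ℝ) + s * p x y) ≤
        max (c ^ pm) (c ^ pp) *
          (|g x - g y| ^ p x y / ‖x - y‖ ^ ((n : ℝ) + s * p x y)) := by
      rw [mul_div_assoc', div_eq_mul_inv, div_eq_mul_inv]
      exact mul_le_mul_of_nonneg_right hnum (inv_nonneg.2 hD)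
    simp only [zero_mul, add_zero]
    calc ENNReal.ofReal (|f x - f y| ^ p x y / ‖x - y‖ ^ ((n : ℝ) + s * p x y))
        ≤ ENNReal.ofReal (max (c ^ pm) (c ^ pp) *
            (|g x - g y| ^ p x y / ‖x - y‖ ^ ((n : ℝ) + s * p x y))) :=
          ENNReal.ofReal_le_ofReal hdiv
      _ = ENNReal.ofReal (max (c ^ pm) (c ^ pp)) *
            ENNReal.ofReal (|g x - g y| ^ p x y / ‖x - y‖ ^ ((n : ℝ) + s * p x y)) :=
          ENNReal.ofReal_mul hmax0
  unfold varModular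
  calc ENNReal.ofReal (s * (1 - s)) * ∫⁻ x in Ω, ∫⁻ y in Ω,
        ENNReal.ofReal (|f x - f y| ^ p x y / ‖x - y‖ ^ ((n : ℝ) + s * p x y))
      ≤ ENNReal.ofReal (s * (1 - s)) *
        (ENNReal.ofReal (max (c ^ pm) (c ^ pp)) * (∫⁻ x in Ω, ∫⁻ y in Ω,
          ENNReal.ofReal (|g x - g y| ^ p x y / ‖x - y‖ ^ ((n : ℝ) + s * p x y)))) :=
        mul_le_mul_right key _
    _ = _ := by ring

lemma varModular_sub_comm (f g : EuclideanSpace ℝ (Fin n) → ℝ) :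
    varModular n Ω p s (fun x => f x - g x) = varModular n Ω p s (fun x => g x - f x) := by
  unfold varModular
  congr 1
  refine lintegral_congr fun x => lintegral_congr fun y => ?_
  have : |(f x - g x) - (f y - g y)| = |(g x - f x) - (g y - f y)| := by
    rw [abs_sub_comm]
    congr 1
    ring
  rw [this]

lemma seminorm_le_of_modular {v : EuclideanSpace ℝ (Fin n) → ℝ} {lam : ℝ} (hlam : 0 < lam)
    (h : varModular n Ω p s (fun x => v x / lam) ≤ 1) :
    wsSeminorm n Ω p s v ≤ ENNReal.ofReal lam :=
  sInf_le ⟨lam, ⟨hlam, h⟩, rfl⟩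

lemma exists_modular_le_of_lt {v : EuclideanSpace ℝ (Fin n) → ℝ} {lam : ℝ} (hlam : 0 < lam)
    (h : wsSeminorm n Ω p s v < ENNReal.ofReal lam) :
    ∃ μ : ℝ, 0 < μ ∧ μ < lam ∧ varModular n Ω p s (fun x => v x / μ) ≤ 1 := by
  obtain ⟨b, hb, hblt⟩ := sInf_lt_iff.mp h
  obtain ⟨μ, ⟨hμ, hmod⟩, rfl⟩ := hb
  exact ⟨μ, hμ, (ENNReal.ofReal_lt_ofReal_iff hlam).1 hblt, hmod⟩

lemma modular_lt_top_of_seminorm (hΩ : MeasurableSet Ω) (hp : Measurable (Function.uncurry p))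
    {pm pp : ℝ} (hp_bound : ∀ x ∈ Ω, ∀ y ∈ Ω, pm ≤ p x y ∧ p x y ≤ pp)
    {f : EuclideanSpace ℝ (Fin n) → ℝ} (hf : Measurable f)
    (h : wsSeminorm n Ω p s f < ⊤) : varModular n Ω p s f < ⊤ := by
  have hne : ((fun lam : ℝ => ENNReal.ofReal lam) ''
      {lam : ℝ | 0 < lam ∧ varModular n Ω p s (fun x => f x / lam) ≤ 1}).Nonempty := by
    by_contra hemp
    rw [not_nonempty_iff_eq_empty] at hemp
    rw [wsSeminorm, hemp, sInf_empty] at h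
    exact (lt_irrefl _ h)
  obtain ⟨b, hb⟩ := hne
  obtain ⟨μ, ⟨hμ, hmod⟩, rfl⟩ := hb
  have hratio : varModular n Ω p s f ≤
      ENNReal.ofReal (max (μ ^ pm) (μ ^ pp)) * varModular n Ω p s (fun x => f x / μ) :=
    varModular_ratio_le hΩ hp hp_bound (hf.div_const μ) hμ (fun x => by field_simp)
  calc varModular n Ω p s f
      ≤ ENNReal.ofReal (max (μ ^ pm) (μ ^ pp)) * varModular n Ω p s (fun x => f x / μ) := hratio
    _ ≤ ENNReal.ofReal (max (μ ^ pm) (μ ^ pp)) * 1 := mul_le_mul_right hmod _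
    _ < ⊤ := by simpa using ENNReal.ofReal_lt_top

end Aux

/-- **Lemma 2.2 (modular convergence)**: for `u, u_k` with finite seminorms,
`[u_k - u]_{s,p} → 0` iff `ϱ_{s,p}(u_k - u) → 0`, and in that case
`ϱ_{s,p}(u_k) → ϱ_{s,p}(u)`. -/
theorem modular_convergence
    (n : ℕ) (hn : 1 ≤ n)
    (Ω : Set (EuclideanSpace ℝ (Fin n))) (hΩ : IsOpen Ω)
    (p : EuclideanSpace ℝ (Fin n) → EuclideanSpace ℝ (Fin n) → ℝ)
    (hp_meas : Measurable (Function.uncurry p))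
    (pm pp : ℝ) (hpm : 1 < pm) (hpmpp : pm ≤ pp)
    (hp_bound : ∀ x ∈ Ω, ∀ y ∈ Ω, pm ≤ p x y ∧ p x y ≤ pp)
    (s : ℝ) (hs : s ∈ Set.Ioo (0 : ℝ) 1)
    (u : EuclideanSpace ℝ (Fin n) → ℝ) (hu_meas : Measurable u)
    (hu_fin : wsSeminorm n Ω p s u < ⊤)
    (uk : ℕ → EuclideanSpace ℝ (Fin n) → ℝ) (huk_meas : ∀ k, Measurable (uk k))
    (huk_fin : ∀ k, wsSeminorm n Ω p s (uk k) < ⊤) :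
    (Tendsto (fun k => wsSeminorm n Ω p s (fun x => uk k x - u x)) atTop (𝓝 0) ↔
      Tendsto (fun k => varModular n Ω p s (fun x => uk k x - u x)) atTop (𝓝 0)) ∧
    (Tendsto (fun k => varModular n Ω p s (fun x => uk k x - u x)) atTop (𝓝 0) →
      Tendsto (fun k => varModular n Ω p s (uk k)) atTop (𝓝 (varModular n Ω p s u))) := by
  have hΩm : MeasurableSet Ω := hΩ.measurableSet
  have hpm0 : (0:ℝ) < pm := lt_trans zero_lt_one hpm
  have hpp1 : (1:ℝ) < pp := lt_of_lt_of_le hpm hpmpp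
  have hp_bound1 : ∀ x ∈ Ω, ∀ y ∈ Ω, 1 ≤ p x y ∧ p x y ≤ pp := fun x hx y hy =>
    ⟨le_trans hpm.le (hp_bound x hx y hy).1, (hp_bound x hx y hy).2⟩
  have hv_meas : ∀ k, Measurable fun x => uk k x - u x :=
    fun k => (huk_meas k).sub hu_meas
  refine ⟨⟨?_, ?_⟩, ?_⟩
  · -- seminorm → 0 implies modular → 0
    intro h
    rw [ENNReal.tendsto_nhds_zero] at h ⊢
    intro ε hε
    set ε' := min ε 1 with hε'def
    have hε'pos : 0 < ε' := lt_min hε zero_lt_one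
    have hε'top : ε' ≠ ⊤ := ne_top_of_le_ne_top ENNReal.one_ne_top (min_le_right _ _)
    set e := ε'.toReal with hedef
    have he : 0 < e := ENNReal.toReal_pos hε'pos.ne' hε'top
    have he1 : e ≤ 1 := by
      have h1 := ENNReal.toReal_mono ENNReal.one_ne_top (min_le_right ε 1)
      simpa using h1
    set δ := e ^ pm⁻¹ with hδdef
    have hδpos : 0 < δ := Real.rpow_pos_of_pos he _
    have hδ1 : δ ≤ 1 := Real.rpow_le_one he.le he1 (inv_nonneg.2 hpm0.le)
    have hδpm : δ ^ pm = e := by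
      rw [hδdef, ← Real.rpow_mul he.le, inv_mul_cancel₀ hpm0.ne', Real.rpow_one]
    have hhalf : (0:ℝ≥0∞) < ENNReal.ofReal (δ/2) := ENNReal.ofReal_pos.2 (by linarith)
    filter_upwards [h _ hhalf] with k hk
    have hlt : wsSeminorm n Ω p s (fun x => uk k x - u x) < ENNReal.ofReal δ :=
      lt_of_le_of_lt hk ((ENNReal.ofReal_lt_ofReal_iff hδpos).2 (by linarith))
    obtain ⟨μ, hμ0, hμδ, hmod⟩ := exists_modular_le_of_lt hδpos hlt
    have hratio : varModular n Ω p s (fun x => uk k x - u x) ≤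
        ENNReal.ofReal (max (μ ^ pm) (μ ^ pp)) *
          varModular n Ω p s (fun x => (uk k x - u x) / μ) :=
      varModular_ratio_le hΩm hp_meas hp_bound ((hv_meas k).div_const μ) hμ0
        (fun x => by field_simp)
    have hμ1 : μ ≤ 1 := le_trans hμδ.le hδ1
    have hmaxeq : max (μ ^ pm) (μ ^ pp) = μ ^ pm :=
      max_eq_left (Real.rpow_le_rpow_of_exponent_ge hμ0 hμ1 hpmpp)
    calc varModular n Ω p s (fun x => uk k x - u x)
        ≤ ENNReal.ofReal (max (μ ^ pm) (μ ^ pp)) * 1 :=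
          hratio.trans (mul_le_mul_right hmod _)
      _ = ENNReal.ofReal (μ ^ pm) := by rw [hmaxeq, mul_one]
      _ ≤ ENNReal.ofReal (δ ^ pm) :=
          ENNReal.ofReal_le_ofReal (Real.rpow_le_rpow hμ0.le hμδ.le hpm0.le)
      _ = ε' := by rw [hδpm, hedef]; exact ENNReal.ofReal_toReal hε'top
      _ ≤ ε := min_le_left _ _
  · -- modular → 0 implies seminorm → 0
    intro h
    rw [ENNReal.tendsto_nhds_zero] at h ⊢
    intro ε hε
    set ε' := min ε 1 with hε'def
    have hε'pos : 0 < ε' := lt_min hε zero_lt_one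
    have hε'top : ε' ≠ ⊤ := ne_top_of_le_ne_top ENNReal.one_ne_top (min_le_right _ _)
    set e := ε'.toReal with hedef
    have he : 0 < e := ENNReal.toReal_pos hε'pos.ne' hε'top
    have he1 : e ≤ 1 := by
      have h1 := ENNReal.toReal_mono ENNReal.one_ne_top (min_le_right ε 1)
      simpa using h1
    have hinv1 : 1 ≤ e⁻¹ := by
      have h2 : e * e⁻¹ = 1 := mul_inv_cancel₀ he.ne'
      nlinarith [inv_pos.2 he]
    have hepp : (0:ℝ≥0∞) < ENNReal.ofReal (e ^ pp) :=
      ENNReal.ofReal_pos.2 (Real.rpow_pos_of_pos he _)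
    filter_upwards [h _ hepp] with k hk
    have hscale : varModular n Ω p s (fun x => (uk k x - u x) / e) ≤
        ENNReal.ofReal (max ((e⁻¹) ^ pm) ((e⁻¹) ^ pp)) *
          varModular n Ω p s (fun x => uk k x - u x) :=
      varModular_ratio_le hΩm hp_meas hp_bound (hv_meas k)
        (inv_pos.2 he) (fun x => div_eq_inv_mul _ _)
    have hmaxeq : max ((e⁻¹) ^ pm) ((e⁻¹) ^ pp) = (e⁻¹) ^ pp :=
      max_eq_right (Real.rpow_le_rpow_of_exponent_le hinv1 hpmpp)
    have hone : varModular n Ω p s (fun x => (uk k x - u x) / e) ≤ 1 := by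
      calc varModular n Ω p s (fun x => (uk k x - u x) / e)
          ≤ ENNReal.ofReal ((e⁻¹) ^ pp) * ENNReal.ofReal (e ^ pp) := by
            rw [← hmaxeq]
            exact hscale.trans (mul_le_mul_right hk _)
        _ = ENNReal.ofReal (((e⁻¹) * e) ^ pp) := by
            rw [← ENNReal.ofReal_mul (Real.rpow_nonneg (inv_nonneg.2 he.le) _),
              Real.mul_rpow (inv_nonneg.2 he.le) he.le]
        _ = 1 := by rw [inv_mul_cancel₀ he.ne', Real.one_rpow, ENNReal.ofReal_one]
    calc wsSeminorm n Ω p s (fun x => uk k x - u x) ≤ ENNReal.ofReal e :=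
          seminorm_le_of_modular he hone
      _ = ε' := ENNReal.ofReal_toReal hε'top
      _ ≤ ε := min_le_left _ _
  · -- modular convergence of differences implies convergence of modulars
    intro h
    have hρu_fin : varModular n Ω p s u < ⊤ :=
      modular_lt_top_of_seminorm hΩm hp_meas hp_bound hu_meas hu_fin
    rw [ENNReal.tendsto_nhds hρu_fin.ne]
    intro ε hε
    set ε' := min ε 1 with hε'def
    have hε'pos : 0 < ε' := lt_min hε zero_lt_one
    have hε'top : ε' ≠ ⊤ := ne_top_of_le_ne_top ENNReal.one_ne_top (min_le_right _ _)
    set r := ε'.toReal with hrdef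
    have hr : 0 < r := ENNReal.toReal_pos hε'pos.ne' hε'top
    have hε'r : ENNReal.ofReal r = ε' := ENNReal.ofReal_toReal hε'top
    set t := (varModular n Ω p s u).toReal with htdef
    have htofReal : varModular n Ω p s u = ENNReal.ofReal t :=
      (ENNReal.ofReal_toReal hρu_fin.ne).symm
    have ht0 : 0 ≤ t := ENNReal.toReal_nonneg
    set κ := (r/2)/(t+1) with hκdef
    have hκ0 : 0 < κ := by positivity
    have hκt : κ * (t+1) = r/2 := by
      rw [hκdef]; field_simp
    have hppne : pp - 1 ≠ 0 := ne_of_gt (by linarith)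
    set η := (1+κ) ^ (pp-1)⁻¹ - 1 with hηdef
    have hηpos : 0 < η := by
      have h1 : 1 < (1+κ) ^ (pp-1)⁻¹ :=
        (Real.one_lt_rpow_iff_of_pos (by linarith)).2
          (Or.inl ⟨by linarith, inv_pos.2 (by linarith)⟩)
      rw [hηdef]; linarith
    have hA : (1+η) ^ (pp-1) = 1+κ := by
      have h1 : 1 + η = (1+κ) ^ (pp-1)⁻¹ := by rw [hηdef]; ring
      rw [h1, ← Real.rpow_mul (by linarith), inv_mul_cancel₀ hppne, Real.rpow_one]
    set Br := (1+η⁻¹) ^ (pp-1) with hBrdef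
    have hBr0 : 0 < Br := Real.rpow_pos_of_pos (by positivity) _
    set β := (r/2)/Br with hβdef
    have hβ0 : 0 < β := by positivity
    have hβB : ENNReal.ofReal Br * ENNReal.ofReal β = ENNReal.ofReal (r/2) := by
      rw [← ENNReal.ofReal_mul hBr0.le]
      congr 1
      rw [hβdef]
      field_simp
    rw [ENNReal.tendsto_nhds_zero] at h
    filter_upwards [h _ (ENNReal.ofReal_pos.2 hβ0)] with k hk
    have hBhk : ENNReal.ofReal Br * varModular n Ω p s (fun x => uk k x - u x) ≤
        ENNReal.ofReal (r/2) := by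
      rw [← hβB]
      exact mul_le_mul_right hk _
    constructor
    · -- lower bound
      refine le_trans (tsub_le_tsub_left (min_le_left ε 1) _) ?_
      rcases le_or_gt t r with hcase | hcase
      · have hle : varModular n Ω p s u ≤ ε' := by
          rw [htofReal, ← hε'r]
          exact ENNReal.ofReal_le_ofReal hcase
        rw [tsub_eq_zero_of_le hle]
        exact zero_le
      · have h2 : varModular n Ω p s u =
            varModular n Ω p s (fun x => uk k x + (u x - uk k x)) := by
          congr 1; funext x; ring
        have hswap : varModular n Ω p s (fun x => u x - uk k x) =
            varModular n Ω p s (fun x => uk k x - u x) := varModular_sub_comm u (uk k)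
        have hdown : varModular n Ω p s u ≤
            ENNReal.ofReal (1+κ) * varModular n Ω p s (uk k) + ENNReal.ofReal (r/2) := by
          calc varModular n Ω p s u
              = varModular n Ω p s (fun x => uk k x + (u x - uk k x)) := h2
            _ ≤ ENNReal.ofReal ((1+η) ^ (pp-1)) * varModular n Ω p s (uk k) +
                ENNReal.ofReal Br * varModular n Ω p s (fun x => u x - uk k x) :=
                varModular_add_le hΩm hp_meas hp_bound1 (huk_meas k)
                  (hu_meas.sub (huk_meas k)) hηpos
            _ = ENNReal.ofReal (1+κ) * varModular n Ω p s (uk k) +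
                ENNReal.ofReal Br * varModular n Ω p s (fun x => uk k x - u x) := by
                rw [hA, hswap]
            _ ≤ ENNReal.ofReal (1+κ) * varModular n Ω p s (uk k) +
                ENNReal.ofReal (r/2) := add_le_add_right hBhk _
        have hstep : ENNReal.ofReal (t - r/2) ≤
            ENNReal.ofReal (1+κ) * varModular n Ω p s (uk k) := by
          rw [ENNReal.ofReal_sub t (by linarith : (0:ℝ) ≤ r/2)]
          rw [htofReal] at hdown
          exact tsub_le_iff_right.2 hdown
        have hkey : ENNReal.ofReal ((1+κ) * (t-r)) ≤
            ENNReal.ofReal (1+κ) * varModular n Ω p s (uk k) := by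
          refine le_trans (ENNReal.ofReal_le_ofReal ?_) hstep
          nlinarith [hκ0, hcase, hr, ht0, hκt]
        have hcancel : ENNReal.ofReal (t - r) ≤ varModular n Ω p s (uk k) := by
          rw [ENNReal.ofReal_mul (by linarith : (0:ℝ) ≤ 1+κ)] at hkey
          exact (ENNReal.mul_le_mul_iff_right
            (ENNReal.ofReal_pos.2 (by linarith : (0:ℝ) < 1+κ)).ne'
            ENNReal.ofReal_ne_top).1 hkey
        calc varModular n Ω p s u - ε' = ENNReal.ofReal t - ENNReal.ofReal r := by
              rw [htofReal, hε'r]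
          _ = ENNReal.ofReal (t - r) := (ENNReal.ofReal_sub t hr.le).symm
          _ ≤ varModular n Ω p s (uk k) := hcancel
    · -- upper bound
      refine le_trans ?_ (add_le_add_right (min_le_left ε 1) _)
      have h1 : varModular n Ω p s (uk k) =
          varModular n Ω p s (fun x => u x + (uk k x - u x)) := by
        congr 1; funext x; ring
      calc varModular n Ω p s (uk k)
          = varModular n Ω p s (fun x => u x + (uk k x - u x)) := h1
        _ ≤ ENNReal.ofReal ((1+η) ^ (pp-1)) * varModular n Ω p s u +
            ENNReal.ofReal Br * varModular n Ω p s (fun x => uk k x - u x) :=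
            varModular_add_le hΩm hp_meas hp_bound1 hu_meas (hv_meas k) hηpos
        _ ≤ ENNReal.ofReal (1+κ) * ENNReal.ofReal t + ENNReal.ofReal (r/2) := by
            rw [hA, ← htofReal]
            exact add_le_add_right hBhk _
        _ = ENNReal.ofReal ((1+κ) * t) + ENNReal.ofReal (r/2) := by
            rw [ENNReal.ofReal_mul (by linarith : (0:ℝ) ≤ 1+κ)]
        _ ≤ ENNReal.ofReal (t + r/2) + ENNReal.ofReal (r/2) := by
            refine add_le_add_left (ENNReal.ofReal_le_ofReal ?_) _
            nlinarith [hκ0, ht0, hκt, hr]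
        _ = varModular n Ω p s u + ε' := by
            rw [ENNReal.ofReal_add ht0 (by linarith : (0:ℝ) ≤ r/2), add_assoc,
              ← ENNReal.ofReal_add (by linarith : (0:ℝ) ≤ r/2)
                (by linarith : (0:ℝ) ≤ r/2),
              show r/2 + r/2 = r by ring, hε'r, ← htofReal]
end

section
/- Let n ≥ 1 be an integer, let Ω ⊆ ℝⁿ be an open set, let p : Ω × Ω → ℝ be measurable satisfying (P), let s₀ ∈ (0,1), and let u : ℝⁿ → ℝ be a bounded measurable function with support contained in the ball B_{R/2} for some R > 2. Then for every x ∈ Ω \ B_R and every s ∈ [s₀, 1), s(1−s) ∫_Ω |u(x)−u(y)|^{p(x,y)} / |x−y|^{n+s·p(x,y)} dy ≤ |B_{R/2}| (‖u‖_∞^{p₊} + ‖u‖_∞^{p₋}) (2/|x|)^{n+s₀ p₋}, where |B_{R/2}| is the Lebesgue measure of the ball of radius R/2 and ‖u‖_∞ = sup_{ℝⁿ} |u|. -/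
open MeasureTheory Filter Metric Set
open scoped ENNReal Topology

/-- **Decay bound in Lemma 3.3**: if `u` is bounded measurable with support in `B_{R/2}`,
`R > 2`, then for `x ∈ Ω \ B_R` and `s ∈ [s₀, 1)`,
`s(1-s) ∫_Ω |u(x)-u(y)|^{p(x,y)}/|x-y|^{n+sp(x,y)} dy
  ≤ |B_{R/2}| (‖u‖_∞^{p₊} + ‖u‖_∞^{p₋}) (2/|x|)^{n+s₀p₋}`. -/
theorem Fs_decay_bound
    (n : ℕ) (hn : 1 ≤ n)
    (Ω : Set (EuclideanSpace ℝ (Fin n))) (hΩ : IsOpen Ω)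
    (p : EuclideanSpace ℝ (Fin n) → EuclideanSpace ℝ (Fin n) → ℝ)
    (hp_meas : Measurable (Function.uncurry p))
    (pm pp : ℝ) (hpm : 1 < pm) (hpmpp : pm ≤ pp)
    (hp_bound : ∀ x ∈ Ω, ∀ y ∈ Ω, pm ≤ p x y ∧ p x y ≤ pp)
    (s₀ : ℝ) (hs₀ : s₀ ∈ Set.Ioo (0 : ℝ) 1)
    (R : ℝ) (hR : 2 < R)
    (u : EuclideanSpace ℝ (Fin n) → ℝ) (hu_meas : Measurable u)
    (hu_bdd : BddAbove (Set.range fun z => |u z|))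
    (hu_supp : Function.support u ⊆ ball (0 : EuclideanSpace ℝ (Fin n)) (R / 2)) :
    ∀ x ∈ Ω \ ball (0 : EuclideanSpace ℝ (Fin n)) R, ∀ s : ℝ, s₀ ≤ s → s < 1 →
      ENNReal.ofReal (s * (1 - s)) *
          (∫⁻ y in Ω, ENNReal.ofReal
            (|u x - u y| ^ p x y / ‖x - y‖ ^ ((n : ℝ) + s * p x y))) ≤
        ENNReal.ofReal
          ((volume (ball (0 : EuclideanSpace ℝ (Fin n)) (R / 2))).toReal *
            ((⨆ z, |u z|) ^ pp + (⨆ z, |u z|) ^ pm) *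
            (2 / ‖x‖) ^ ((n : ℝ) + s₀ * pm)) := by
  intro x hx s hss hs1
  obtain ⟨hs₀0, hs₀1⟩ := hs₀
  set M : ℝ := ⨆ z, |u z| with hMdef
  have hMz : ∀ z, |u z| ≤ M := fun z => le_ciSup hu_bdd z
  have hM0 : 0 ≤ M := le_trans (abs_nonneg (u 0)) (hMz 0)
  have hxR : R ≤ ‖x‖ := by
    have h := hx.2
    simp only [mem_ball, dist_zero_right, not_lt] at h
    exact h
  have hx2 : 2 < ‖x‖ := lt_of_lt_of_le hR hxR
  have hux : u x = 0 := by
    by_contra h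
    have hxsupp := hu_supp h
    rw [mem_ball, dist_zero_right] at hxsupp
    have : R / 2 < R := by linarith
    linarith
  have hpm0 : (0 : ℝ) < pm := by linarith
  have he0 : (0 : ℝ) < (n : ℝ) + s₀ * pm := by
    have : (0 : ℝ) < s₀ * pm := mul_pos hs₀0 hpm0
    have hn' : (0 : ℝ) ≤ (n : ℝ) := Nat.cast_nonneg n
    linarith
  set C : ℝ := (M ^ pp + M ^ pm) * (2 / ‖x‖) ^ ((n : ℝ) + s₀ * pm) with hCdef
  have hMsum0 : 0 ≤ M ^ pp + M ^ pm :=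
    add_nonneg (Real.rpow_nonneg hM0 _) (Real.rpow_nonneg hM0 _)
  have hx0 : (0 : ℝ) < ‖x‖ := by linarith
  have hbase : (1 : ℝ) ≤ ‖x‖ / 2 := by linarith
  have hbase0 : (0 : ℝ) < ‖x‖ / 2 := by linarith
  have hinv : (2 / ‖x‖ : ℝ) ^ ((n : ℝ) + s₀ * pm)
      = ((‖x‖ / 2) ^ ((n : ℝ) + s₀ * pm))⁻¹ := by
    rw [show (2 / ‖x‖ : ℝ) = (‖x‖ / 2)⁻¹ from (inv_div ‖x‖ 2).symm,
      Real.inv_rpow hbase0.le]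
  -- pointwise bound on Ω
  have hpt : ∀ y ∈ Ω,
      ENNReal.ofReal (|u x - u y| ^ p x y / ‖x - y‖ ^ ((n : ℝ) + s * p x y))
        ≤ (ball (0 : EuclideanSpace ℝ (Fin n)) (R / 2)).indicator
            (fun _ => ENNReal.ofReal C) y := by
    intro y hy
    obtain ⟨hq1, hq2⟩ := hp_bound x hx.1 y hy
    have hq0 : (0 : ℝ) < p x y := lt_of_lt_of_le hpm0 hq1
    by_cases hyB : y ∈ ball (0 : EuclideanSpace ℝ (Fin n)) (R / 2)
    · rw [Set.indicator_of_mem hyB]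
      apply ENNReal.ofReal_le_ofReal
      have hyR : ‖y‖ < R / 2 := by
        have := hyB; rwa [mem_ball, dist_zero_right] at this
      -- denominator lower bound
      have hd1 : ‖x‖ / 2 ≤ ‖x - y‖ := by
        have h1 : ‖x‖ - ‖y‖ ≤ ‖x - y‖ := norm_sub_norm_le x y
        have : ‖y‖ < ‖x‖ / 2 := by linarith
        linarith
      have hd1' : (1 : ℝ) ≤ ‖x - y‖ := le_trans hbase hd1
      have hexp : (n : ℝ) + s₀ * pm ≤ (n : ℝ) + s * p x y := by
        have : s₀ * pm ≤ s * p x y :=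
          mul_le_mul hss hq1 hpm0.le (le_trans hs₀0.le hss)
        linarith
      have hden : (‖x‖ / 2) ^ ((n : ℝ) + s₀ * pm) ≤ ‖x - y‖ ^ ((n : ℝ) + s * p x y) :=
        le_trans (Real.rpow_le_rpow hbase0.le hd1 he0.le)
          (Real.rpow_le_rpow_of_exponent_le hd1' hexp)
      -- numerator upper bound
      have hnum : |u x - u y| ^ p x y ≤ M ^ pp + M ^ pm := by
        rw [hux, zero_sub, abs_neg]
        rcases eq_or_lt_of_le hM0 with hMeq | hMpos
        · have : |u y| = 0 := le_antisymm (by rw [hMeq]; exact hMz y) (abs_nonneg _)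
          rw [this, Real.zero_rpow hq0.ne']
          exact hMsum0
        · have h1 : |u y| ^ p x y ≤ M ^ p x y :=
            Real.rpow_le_rpow (abs_nonneg _) (hMz y) hq0.le
          rcases le_or_gt 1 M with hM1 | hM1
          · have h2 : M ^ p x y ≤ M ^ pp :=
              Real.rpow_le_rpow_of_exponent_le hM1 hq2
            have h3 : (0 : ℝ) ≤ M ^ pm := Real.rpow_nonneg hM0 _
            linarith
          · have h2 : M ^ p x y ≤ M ^ pm :=
              Real.rpow_le_rpow_of_exponent_ge hMpos hM1.le hq1
            have h3 : (0 : ℝ) ≤ M ^ pp := Real.rpow_nonneg hM0 _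
            linarith
      calc |u x - u y| ^ p x y / ‖x - y‖ ^ ((n : ℝ) + s * p x y)
          ≤ (M ^ pp + M ^ pm) / (‖x‖ / 2) ^ ((n : ℝ) + s₀ * pm) :=
            div_le_div₀ hMsum0 hnum (Real.rpow_pos_of_pos hbase0 _) hden
        _ = C := by rw [hCdef, hinv, div_eq_mul_inv]
    · rw [Set.indicator_of_notMem hyB]
      have huy : u y = 0 := by
        by_contra h; exact hyB (hu_supp h)
      rw [hux, huy, sub_zero, abs_zero, Real.zero_rpow hq0.ne', zero_div]
      simp
  have hC0 : 0 ≤ C := mul_nonneg hMsum0 (Real.rpow_nonneg (by positivity) _)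
  have hint : (∫⁻ y in Ω, ENNReal.ofReal
        (|u x - u y| ^ p x y / ‖x - y‖ ^ ((n : ℝ) + s * p x y)))
      ≤ volume (ball (0 : EuclideanSpace ℝ (Fin n)) (R / 2)) * ENNReal.ofReal C := by
    calc (∫⁻ y in Ω, ENNReal.ofReal
          (|u x - u y| ^ p x y / ‖x - y‖ ^ ((n : ℝ) + s * p x y)))
        ≤ ∫⁻ y in Ω, (ball (0 : EuclideanSpace ℝ (Fin n)) (R / 2)).indicator
            (fun _ => ENNReal.ofReal C) y := setLIntegral_mono' hΩ.measurableSet hpt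
      _ ≤ ∫⁻ y, (ball (0 : EuclideanSpace ℝ (Fin n)) (R / 2)).indicator
            (fun _ => ENNReal.ofReal C) y := setLIntegral_le_lintegral _ _
      _ = volume (ball (0 : EuclideanSpace ℝ (Fin n)) (R / 2)) * ENNReal.ofReal C := by
          rw [lintegral_indicator_const measurableSet_ball, mul_comm]
  have hs' : ENNReal.ofReal (s * (1 - s)) ≤ 1 := by
    apply ENNReal.ofReal_le_one.2
    nlinarith [lt_of_lt_of_le hs₀0 hss]
  have hvol : volume (ball (0 : EuclideanSpace ℝ (Fin n)) (R / 2)) ≠ ⊤ :=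
    measure_ball_lt_top.ne
  calc ENNReal.ofReal (s * (1 - s)) *
        (∫⁻ y in Ω, ENNReal.ofReal
          (|u x - u y| ^ p x y / ‖x - y‖ ^ ((n : ℝ) + s * p x y)))
      ≤ 1 * (volume (ball (0 : EuclideanSpace ℝ (Fin n)) (R / 2)) * ENNReal.ofReal C) :=
        mul_le_mul' hs' hint
    _ = volume (ball (0 : EuclideanSpace ℝ (Fin n)) (R / 2)) * ENNReal.ofReal C := one_mul _
    _ = ENNReal.ofReal
          ((volume (ball (0 : EuclideanSpace ℝ (Fin n)) (R / 2))).toReal *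
            ((M ^ pp + M ^ pm) * (2 / ‖x‖) ^ ((n : ℝ) + s₀ * pm))) := by
        rw [ENNReal.ofReal_mul ENNReal.toReal_nonneg, ENNReal.ofReal_toReal hvol]
    _ = ENNReal.ofReal
          ((volume (ball (0 : EuclideanSpace ℝ (Fin n)) (R / 2))).toReal *
            ((⨆ z, |u z|) ^ pp + (⨆ z, |u z|) ^ pm) *
            (2 / ‖x‖) ^ ((n : ℝ) + s₀ * pm)) := by rw [mul_assoc]
end
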